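/- arXiv:1409.6276 — 7 statements merged into one kernel-verified Lean document; each statement's English description precedes it below -/
import Mathlib

section
/- Let X₁, …, Xₙ be i.i.d. random variables with the beta distribution of parameters α > 0, β > 0, let X̄ₙ = (1/n)∑_{i=1}^n Xᵢ, and let μ = α/(α+β). For z ∈ (0,1), define α̂ = βz/(1−z) and β̂ = α(1−z)/z. Then: (i) for 0 < z ≤ μ, Pr{X̄ₙ ≤ z} ≤ [ (B(α̂,β)/B(α,β)) · z^α / z^{α̂} ]ⁿ; (ii) for μ ≤ z < 1, Pr{X̄ₙ ≥ z} ≤ [ (B(α,β̂)/B(α,β)) · (1−z)^β / (1−z)^{β̂} ]ⁿ. -/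
open MeasureTheory ProbabilityTheory Real

/-- The Beta function `B(a,b) = Γ(a)Γ(b)/Γ(a+b)`. -/
noncomputable def betaFn (a b : ℝ) : ℝ := Real.Gamma a * Real.Gamma b / Real.Gamma (a + b)

open scoped ENNReal

lemma betaFn_pos {a b : ℝ} (ha : 0 < a) (hb : 0 < b) : 0 < betaFn a b := by
  unfold betaFn
  have := Real.Gamma_pos_of_pos ha
  have := Real.Gamma_pos_of_pos hb
  have := Real.Gamma_pos_of_pos (by linarith : (0:ℝ) < a + b)
  positivity

lemma ofReal_cpow_sub_one {x : ℝ} (t : ℝ) (hx : 0 ≤ x) :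
    (x:ℂ) ^ ((t:ℂ) - 1) = ((x ^ (t-1) : ℝ) : ℂ) := by
  rw [show ((t:ℂ) - 1) = ((t - 1 : ℝ) : ℂ) by push_cast; ring, Complex.ofReal_cpow hx]

lemma beta_integrand_intervalIntegrable {a b : ℝ} (ha : 0 < a) (hb : 0 < b) :
    IntervalIntegrable (fun x : ℝ => x ^ (a - 1) * (1 - x) ^ (b - 1)) volume 0 1 := by
  have h := Complex.betaIntegral_convergent (u := a) (v := b) (by simpa using ha) (by simpa using hb)
  rw [intervalIntegrable_iff_integrableOn_Ioc_of_le (by norm_num)] at h ⊢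
  have h2 : IntegrableOn (fun x : ℝ => ((x:ℂ) ^ ((a:ℂ) - 1) * (1 - (x:ℂ)) ^ ((b:ℂ) - 1)).re) (Set.Ioc 0 1) volume := h.re
  refine h2.congr_fun ?_ measurableSet_Ioc
  intro x hx
  have hx0 : (0:ℝ) ≤ x := hx.1.le
  have hx1 : (0:ℝ) ≤ 1 - x := by linarith [hx.2]
  dsimp only
  rw [show (1 - (x:ℂ)) = ((1 - x : ℝ) : ℂ) by push_cast; ring,
    ofReal_cpow_sub_one a hx0, ofReal_cpow_sub_one b hx1,
    ← Complex.ofReal_mul, Complex.ofReal_re]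

lemma integral_beta {a b : ℝ} (ha : 0 < a) (hb : 0 < b) :
    ∫ x in (0:ℝ)..1, x ^ (a-1) * (1-x) ^ (b-1) = betaFn a b := by
  have key := Complex.Gamma_mul_Gamma_eq_betaIntegral (s := a) (t := b)
    (by simpa using ha) (by simpa using hb)
  have hBI : Complex.betaIntegral a b
      = ((∫ x in (0:ℝ)..1, x ^ (a-1) * (1-x) ^ (b-1) : ℝ) : ℂ) := by
    rw [Complex.betaIntegral, ← intervalIntegral.integral_ofReal]
    refine intervalIntegral.integral_congr fun x hx => ?_
    rw [Set.uIcc_of_le (by norm_num : (0:ℝ) ≤ 1)] at hx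
    rw [show (1 - (x:ℂ)) = ((1 - x : ℝ) : ℂ) by push_cast; ring,
      ofReal_cpow_sub_one a hx.1, ofReal_cpow_sub_one b (by linarith [hx.2]),
      ← Complex.ofReal_mul]
  rw [hBI, ← Complex.ofReal_add, Complex.Gamma_ofReal, Complex.Gamma_ofReal,
    Complex.Gamma_ofReal, ← Complex.ofReal_mul, ← Complex.ofReal_mul] at key
  have key2 := Complex.ofReal_injective key
  have hG : Real.Gamma (a + b) ≠ 0 := (Real.Gamma_pos_of_pos (by linarith)).ne'
  rw [betaFn, eq_div_iff hG]
  linarith [key2]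

lemma meas_aux {F : ℝ → ℝ} (hF : Measurable F) :
    Measurable (fun x : ℝ => ENNReal.ofReal (if 0 < x ∧ x < 1 then F x else 0)) := by
  apply ENNReal.measurable_ofReal.comp
  exact Measurable.ite (measurableSet_Ioo : MeasurableSet (Set.Ioo (0:ℝ) 1)) hF measurable_const

lemma meas_rpow2 (p q : ℝ) : Measurable (fun x : ℝ => x ^ p * (1-x) ^ q) := by
  fun_prop

lemma integrableOn_beta {a b : ℝ} (ha : 0 < a) (hb : 0 < b) :
    IntegrableOn (fun x : ℝ => x ^ (a-1) * (1-x) ^ (b-1)) (Set.Ioo 0 1) volume := by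
  have h := beta_integrand_intervalIntegrable ha hb
  rw [intervalIntegrable_iff_integrableOn_Ioc_of_le (by norm_num)] at h
  exact h.mono_set Set.Ioo_subset_Ioc_self

lemma integral_beta_Ioo {a b : ℝ} (ha : 0 < a) (hb : 0 < b) :
    ∫ x in Set.Ioo (0:ℝ) 1, x ^ (a-1) * (1-x) ^ (b-1) = betaFn a b := by
  rw [← integral_Ioc_eq_integral_Ioo, ← intervalIntegral.integral_of_le (by norm_num : (0:ℝ) ≤ 1)]
  exact integral_beta ha hb

lemma moment_lintegral {α β : ℝ} (p q : ℝ) (hα : 0 < α) (hβ : 0 < β)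
    (hp : 0 < α + p) (hq : 0 < β + q) :
    ∫⁻ x, ENNReal.ofReal (if 0 < x ∧ x < 1 then x ^ p * (1-x) ^ q else 0)
      ∂(volume.withDensity (fun x => ENNReal.ofReal
        (if 0 < x ∧ x < 1 then x ^ (α-1) * (1-x) ^ (β-1) / betaFn α β else 0)))
    = ENNReal.ofReal (betaFn (α+p) (β+q) / betaFn α β) := by
  rw [lintegral_withDensity_eq_lintegral_mul _ (meas_aux (by fun_prop)) (meas_aux (meas_rpow2 p q))]
  have heq : (fun x : ℝ => (ENNReal.ofReal
        (if 0 < x ∧ x < 1 then x ^ (α-1) * (1-x) ^ (β-1) / betaFn α β else 0)) *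
        ENNReal.ofReal (if 0 < x ∧ x < 1 then x ^ p * (1-x) ^ q else 0))
      = fun x : ℝ => ENNReal.ofReal
        (if 0 < x ∧ x < 1 then x ^ ((α+p)-1) * (1-x) ^ ((β+q)-1) / betaFn α β else 0) := by
    funext x
    by_cases hx : 0 < x ∧ x < 1
    · have hx1 : (0:ℝ) < 1 - x := by linarith [hx.2]
      have hx0 : (0:ℝ) < x := hx.1
      have hB := betaFn_pos hα hβ
      rw [if_pos hx, if_pos hx, if_pos hx, ← ENNReal.ofReal_mul (by positivity)]
      congr 1
      have h1 : x ^ ((α+p)-1) = x ^ (α-1) * x ^ p := by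
        rw [← Real.rpow_add hx.1]; ring_nf
      have h2 : (1-x) ^ ((β+q)-1) = (1-x) ^ (β-1) * (1-x) ^ q := by
        rw [← Real.rpow_add hx1]; ring_nf
      rw [h1, h2]; ring
    · simp [hx]
  simp only [Pi.mul_apply]
  rw [heq]
  have hind : (fun x : ℝ => ENNReal.ofReal
        (if 0 < x ∧ x < 1 then x ^ ((α+p)-1) * (1-x) ^ ((β+q)-1) / betaFn α β else 0))
      = (Set.Ioo (0:ℝ) 1).indicator
        (fun x => ENNReal.ofReal (x ^ ((α+p)-1) * (1-x) ^ ((β+q)-1) / betaFn α β)) := by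
    funext x
    by_cases hx : 0 < x ∧ x < 1
    · simp [Set.indicator, Set.mem_Ioo, hx]
    · simp [Set.indicator, Set.mem_Ioo, hx]
  rw [show ∫⁻ x, ENNReal.ofReal
        (if 0 < x ∧ x < 1 then x ^ ((α+p)-1) * (1-x) ^ ((β+q)-1) / betaFn α β else 0)
      = ∫⁻ x in Set.Ioo (0:ℝ) 1,
          ENNReal.ofReal (x ^ ((α+p)-1) * (1-x) ^ ((β+q)-1) / betaFn α β) by
    rw [← lintegral_indicator (measurableSet_Ioo : MeasurableSet (Set.Ioo (0:ℝ) 1))]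
    exact lintegral_congr fun x => congrFun hind x]
  have hB := betaFn_pos hα hβ
  rw [← ofReal_integral_eq_lintegral_ofReal
    (((integrableOn_beta hp hq).div_const (betaFn α β)))
    ((ae_restrict_iff' measurableSet_Ioo).2 (Filter.Eventually.of_forall fun x hx => by
      have hx0 : (0:ℝ) < x := hx.1
      have hx1 : (0:ℝ) < 1 - x := by have := hx.2; linarith
      positivity))]
  rw [MeasureTheory.integral_div, integral_beta_Ioo hp hq]

open ProbabilityTheory in
lemma lintegral_prod_indep {Ω : Type*} [MeasurableSpace Ω] (P : Measure Ω)
    [IsProbabilityMeasure P] {n : ℕ} (X : Fin n → Ω → ℝ) (hmeas : ∀ i, Measurable (X i))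
    (hindep : iIndepFun X P) (g : ℝ → ℝ≥0∞) (hg : Measurable g) :
    ∫⁻ ω, ∏ i, g (X i ω) ∂P = ∏ i, ∫⁻ ω, g (X i ω) ∂P := by
  have hind' : iIndepFun (fun i => g ∘ X i) P :=
    hindep.comp _ (fun i => hg)
  have hmeas' : ∀ i, Measurable (g ∘ X i) := fun i => hg.comp (hmeas i)
  have key : ∀ s : Finset (Fin n),
      ∫⁻ ω, ∏ i ∈ s, g (X i ω) ∂P = ∏ i ∈ s, ∫⁻ ω, g (X i ω) ∂P := by
    intro s
    induction s using Finset.induction_on with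
    | empty => simp
    | @insert a s ha ih =>
      have hIF : IndepFun (∏ j ∈ s, (g ∘ X j)) (g ∘ X a) P :=
        hind'.indepFun_finsetProd_of_notMem hmeas' ha
      rw [Finset.prod_fn] at hIF
      have := lintegral_mul_eq_lintegral_mul_lintegral_of_indepFun
        (Finset.measurable_prod s (fun j _ => hmeas' j)) (hmeas' a) hIF
      simp only [Pi.mul_apply, Finset.prod_apply, Function.comp_apply] at this
      simp only [Finset.prod_insert ha]
      rw [← ih]
      calc ∫⁻ ω, g (X a ω) * ∏ i ∈ s, g (X i ω) ∂P
          = ∫⁻ ω, (∏ i ∈ s, g (X i ω)) * g (X a ω) ∂P := by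
            exact lintegral_congr fun ω => mul_comm _ _
        _ = (∫⁻ ω, ∏ i ∈ s, g (X i ω) ∂P) * ∫⁻ ω, g (X a ω) ∂P := this
        _ = (∫⁻ ω, g (X a ω) ∂P) * ∫⁻ ω, ∏ i ∈ s, g (X i ω) ∂P := mul_comm _ _
  exact key Finset.univ

open ProbabilityTheory in
lemma master {Ω : Type*} [MeasurableSpace Ω] (P : Measure Ω) [IsProbabilityMeasure P]
    {n : ℕ} (X : Fin n → Ω → ℝ) (α β : ℝ) (hα : 0 < α) (hβ : 0 < β)
    (hmeas : ∀ i, Measurable (X i))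
    (hindep : iIndepFun X P)
    (hdist : ∀ i, Measure.map (X i) P =
      volume.withDensity (fun x => ENNReal.ofReal
        (if 0 < x ∧ x < 1 then x ^ (α - 1) * (1 - x) ^ (β - 1) / betaFn α β else 0)))
    (p q : ℝ) (hp : 0 < α + p) (hq : 0 < β + q)
    (E : Set Ω) (c : ℝ) (hc : 0 < c)
    (hE : ∀ ω ∈ E, (∀ i, X i ω ∈ Set.Ioo (0:ℝ) 1) →
      c ≤ ∏ i, (X i ω) ^ p * (1 - X i ω) ^ q) :
    P E ≤ ENNReal.ofReal ((betaFn (α+p) (β+q) / betaFn α β) ^ n / c) := by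
  set g : ℝ → ℝ≥0∞ := fun x =>
    ENNReal.ofReal (if 0 < x ∧ x < 1 then x ^ p * (1-x) ^ q else 0) with hgdef
  have hg : Measurable g := meas_aux (meas_rpow2 p q)
  set F : Ω → ℝ≥0∞ := fun ω => ∏ i, g (X i ω) with hFdef
  have hF : Measurable F := Finset.measurable_prod _ (fun i _ => hg.comp (hmeas i))
  -- value of the integral of F
  have hint : ∫⁻ ω, F ω ∂P = ENNReal.ofReal ((betaFn (α+p) (β+q) / betaFn α β) ^ n) := by
    rw [hFdef]
    rw [lintegral_prod_indep P X hmeas hindep g hg]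
    have hone : ∀ i, ∫⁻ ω, g (X i ω) ∂P
        = ENNReal.ofReal (betaFn (α+p) (β+q) / betaFn α β) := by
      intro i
      rw [← MeasureTheory.lintegral_map hg (hmeas i), hdist i]
      exact moment_lintegral p q hα hβ hp hq
    simp only [hone]
    rw [Finset.prod_const, Finset.card_univ, Fintype.card_fin,
      ENNReal.ofReal_pow (by have h1 := betaFn_pos hα hβ; have h2 := betaFn_pos hp hq; positivity)]
  -- the variables are a.s. in (0,1)
  have hnull : ∀ i, P ((X i) ⁻¹' (Set.Ioo (0:ℝ) 1)ᶜ) = 0 := by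
    intro i
    rw [← Measure.map_apply (hmeas i)
      (measurableSet_Ioo.compl : MeasurableSet (Set.Ioo (0:ℝ) 1)ᶜ),
      hdist i, withDensity_apply _ measurableSet_Ioo.compl]
    rw [setLIntegral_congr_fun measurableSet_Ioo.compl
      (fun x hx => ?_), lintegral_zero]
    have : ¬ (0 < x ∧ x < 1) := hx
    simp [this]
  -- the good set
  set A : Set Ω := ⋂ i, (X i) ⁻¹' (Set.Ioo (0:ℝ) 1) with hAdef
  have hAc : P Aᶜ = 0 := by
    rw [hAdef, Set.compl_iInter]
    exact le_antisymm ((measure_iUnion_le _).trans (by simp [← Set.preimage_compl, hnull])) (zero_le)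
  -- on E ∩ A, F is at least c
  have hsub : E ∩ A ⊆ {ω | ENNReal.ofReal c ≤ F ω} := by
    intro ω hω
    have hA : ∀ i, X i ω ∈ Set.Ioo (0:ℝ) 1 := by
      intro i
      exact Set.mem_iInter.1 hω.2 i
    have hFω : F ω = ENNReal.ofReal (∏ i, (X i ω) ^ p * (1 - X i ω) ^ q) := by
      rw [hFdef, ENNReal.ofReal_prod_of_nonneg (fun i _ => ?_)]
      · refine Finset.prod_congr rfl fun i _ => ?_
        rw [hgdef]
        simp only []
        rw [if_pos ⟨(hA i).1, (hA i).2⟩]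
      · have h1 := (hA i).1
        have h2 : (0:ℝ) < 1 - X i ω := by linarith [(hA i).2]
        positivity
    simp only [Set.mem_setOf_eq, hFω]
    exact ENNReal.ofReal_le_ofReal (hE ω hω.1 hA)
  -- Markov
  have hmarkov : P {ω | ENNReal.ofReal c ≤ F ω} ≤ (∫⁻ ω, F ω ∂P) / ENNReal.ofReal c :=
    meas_ge_le_lintegral_div hF.aemeasurable
      (by simp [ENNReal.ofReal_eq_zero, not_le, hc]) ENNReal.ofReal_ne_top
  have hPE : P E ≤ P {ω | ENNReal.ofReal c ≤ F ω} := by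
    calc P E ≤ P ((E ∩ A) ∪ Aᶜ) := measure_mono (by
          intro ω hω
          by_cases h : ω ∈ A
          · exact Or.inl ⟨hω, h⟩
          · exact Or.inr h)
      _ ≤ P (E ∩ A) + P Aᶜ := measure_union_le _ _
      _ = P (E ∩ A) := by rw [hAc, add_zero]
      _ ≤ _ := measure_mono hsub
  refine hPE.trans (hmarkov.trans ?_)
  rw [hint, ← ENNReal.ofReal_div_of_pos hc]

lemma prod_le_pow_of_sum_le {n : ℕ} (hn : 0 < n) (x : Fin n → ℝ) (hx : ∀ i, 0 ≤ x i)
    {z : ℝ} (hz : 0 ≤ z) (h : ∑ i, x i ≤ n * z) : ∏ i, x i ≤ z ^ n := by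
  have hn' : (0:ℝ) < n := by exact_mod_cast hn
  have hw' : ∑ _i : Fin n, (n:ℝ)⁻¹ = 1 := by
    simp [Finset.sum_const, Finset.card_univ]
    field_simp
  have hgm := Real.geom_mean_le_arith_mean_weighted Finset.univ (fun _ => (n:ℝ)⁻¹) x
    (fun i _ => by positivity) hw' (fun i _ => hx i)
  have hsum : ∑ i, (n:ℝ)⁻¹ * x i ≤ z := by
    have h2 : ∑ i, (n:ℝ)⁻¹ * x i = (∑ i, x i) / n := by
      rw [← Finset.mul_sum]; ring
    rw [h2, div_le_iff₀ hn']
    linarith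
  have hprod : ∏ i, x i = (∏ i, x i ^ ((n:ℝ)⁻¹)) ^ n := by
    rw [← Finset.prod_pow]
    refine Finset.prod_congr rfl fun i _ => ?_
    rw [← Real.rpow_natCast (x i ^ ((n:ℝ)⁻¹)) n, ← Real.rpow_mul (hx i),
      inv_mul_cancel₀ (by positivity), Real.rpow_one]
  rw [hprod]
  exact pow_le_pow_left₀ (Finset.prod_nonneg fun i _ => Real.rpow_nonneg (hx i) _)
    (hgm.trans hsum) n

/-- Tail bounds for the sample mean of `n` i.i.d. Beta(α,β) random variables. -/
theorem beta_sample_mean_tail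
    {Ω : Type*} [MeasurableSpace Ω] (P : Measure Ω) [IsProbabilityMeasure P]
    (n : ℕ) (hn : 0 < n) (X : Fin n → Ω → ℝ) (α β : ℝ) (hα : 0 < α) (hβ : 0 < β)
    (hmeas : ∀ i, Measurable (X i))
    (hindep : iIndepFun X P)
    (hdist : ∀ i, Measure.map (X i) P =
      volume.withDensity (fun x => ENNReal.ofReal
        (if 0 < x ∧ x < 1 then x ^ (α - 1) * (1 - x) ^ (β - 1) / betaFn α β else 0)))
    (z : ℝ) (hz0 : 0 < z) (hz1 : z < 1) :
    (z ≤ α / (α + β) →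
      P {ω | (∑ i, X i ω) / n ≤ z} ≤
        ENNReal.ofReal
          ((betaFn (β * z / (1 - z)) β / betaFn α β * z ^ α / z ^ (β * z / (1 - z))) ^ n)) ∧
    (α / (α + β) ≤ z →
      P {ω | z ≤ (∑ i, X i ω) / n} ≤
        ENNReal.ofReal
          ((betaFn α (α * (1 - z) / z) / betaFn α β
            * (1 - z) ^ β / (1 - z) ^ (α * (1 - z) / z)) ^ n)) := by
  have hz1' : (0:ℝ) < 1 - z := by linarith
  have hαβ : (0:ℝ) < α + β := by linarith
  have hn' : (0:ℝ) < n := by exact_mod_cast hn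
  constructor
  · -- lower tail
    intro hzμ
    set a := β * z / (1 - z) with ha_def
    have ha : 0 < a := by positivity
    have haα : a ≤ α := by
      rw [ha_def, div_le_iff₀ hz1']
      have h1 : z * (α + β) ≤ α := (le_div_iff₀ hαβ).1 hzμ
      nlinarith
    set p := a - α with hp_def
    have hp : 0 < α + p := by rw [hp_def]; linarith
    have hple : p ≤ 0 := by rw [hp_def]; linarith
    have hc : (0:ℝ) < (z ^ p) ^ n := by positivity
    have hbound := master P X α β hα hβ hmeas hindep hdist p 0 hp (by linarith)
      {ω | (∑ i, X i ω) / n ≤ z} ((z ^ p) ^ n) hc ?_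
    · refine hbound.trans (le_of_eq ?_)
      congr 1
      rw [← div_pow]
      congr 1
      have he : α + p = a := by rw [hp_def]; ring
      rw [he, add_zero, hp_def, Real.rpow_sub hz0, div_div_eq_mul_div]
    · intro ω hω hA
      have hsum : ∑ i, X i ω ≤ n * z := by
        have := hω
        simp only [Set.mem_setOf_eq] at this
        rw [div_le_iff₀ hn'] at this
        linarith
      have hprod_le : ∏ i, X i ω ≤ z ^ n :=
        prod_le_pow_of_sum_le hn _ (fun i => (hA i).1.le) hz0.le hsum
      have hprod_pos : 0 < ∏ i, X i ω := Finset.prod_pos fun i _ => (hA i).1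
      have key : (z ^ n : ℝ) ^ p ≤ (∏ i, X i ω) ^ p :=
        Real.rpow_le_rpow_of_nonpos hprod_pos hprod_le hple
      calc (z ^ p) ^ n = (z ^ n : ℝ) ^ p := by
            rw [← Real.rpow_natCast z n, ← Real.rpow_natCast (z ^ p) n,
              ← Real.rpow_mul hz0.le, ← Real.rpow_mul hz0.le, mul_comm]
        _ ≤ (∏ i, X i ω) ^ p := key
        _ = ∏ i, (X i ω) ^ p := (Real.finset_prod_rpow _ _ (fun i _ => (hA i).1.le) _).symm
        _ = ∏ i, (X i ω) ^ p * (1 - X i ω) ^ (0:ℝ) := by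
            refine Finset.prod_congr rfl fun i _ => ?_
            rw [Real.rpow_zero, mul_one]
  · -- upper tail
    intro hzμ
    set b := α * (1 - z) / z with hb_def
    have hb : 0 < b := by positivity
    have hbβ : b ≤ β := by
      rw [hb_def, div_le_iff₀ hz0]
      have h1 : α ≤ z * (α + β) := (div_le_iff₀ hαβ).1 hzμ
      nlinarith
    set q := b - β with hq_def
    have hq : 0 < β + q := by rw [hq_def]; linarith
    have hqle : q ≤ 0 := by rw [hq_def]; linarith
    have hc : (0:ℝ) < ((1 - z) ^ q) ^ n := by positivity
    have hbound := master P X α β hα hβ hmeas hindep hdist 0 q (by linarith) hq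
      {ω | z ≤ (∑ i, X i ω) / n} (((1 - z) ^ q) ^ n) hc ?_
    · refine hbound.trans (le_of_eq ?_)
      congr 1
      rw [← div_pow]
      congr 1
      have he : β + q = b := by rw [hq_def]; ring
      rw [he, add_zero, hq_def, Real.rpow_sub hz1', div_div_eq_mul_div]
    · intro ω hω hA
      have hsum : ∑ i, (1 - X i ω) ≤ n * (1 - z) := by
        have h2 : z ≤ (∑ i, X i ω) / n := hω
        rw [le_div_iff₀ hn'] at h2
        rw [Finset.sum_sub_distrib, Finset.sum_const, Finset.card_univ, Fintype.card_fin]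
        simp only [nsmul_eq_mul, mul_one]
        nlinarith
      have hprod_le : ∏ i, (1 - X i ω) ≤ (1 - z) ^ n :=
        prod_le_pow_of_sum_le hn _ (fun i => by linarith [(hA i).2]) hz1'.le hsum
      have hprod_pos : 0 < ∏ i, (1 - X i ω) :=
        Finset.prod_pos fun i _ => by linarith [(hA i).2]
      have key : ((1 - z) ^ n : ℝ) ^ q ≤ (∏ i, (1 - X i ω)) ^ q :=
        Real.rpow_le_rpow_of_nonpos hprod_pos hprod_le hqle
      calc ((1 - z) ^ q) ^ n = ((1 - z) ^ n : ℝ) ^ q := by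
            rw [← Real.rpow_natCast (1 - z) n, ← Real.rpow_natCast ((1 - z) ^ q) n,
              ← Real.rpow_mul hz1'.le, ← Real.rpow_mul hz1'.le, mul_comm]
        _ ≤ (∏ i, (1 - X i ω)) ^ q := key
        _ = ∏ i, (1 - X i ω) ^ q :=
            (Real.finset_prod_rpow _ _ (fun i _ => by linarith [(hA i).2]) _).symm
        _ = ∏ i, (X i ω) ^ (0:ℝ) * (1 - X i ω) ^ q := by
            refine Finset.prod_congr rfl fun i _ => ?_
            rw [Real.rpow_zero, one_mul]
end

section
/- Let X₁, …, Xₙ be i.i.d. random variables with the beta distribution of parameters α > 0 and β = 1, and let X̄ₙ = (1/n)∑_{i=1}^n Xᵢ. Then for all z with 0 < z < exp(−1/α), Pr{X̄ₙ ≤ z} ≤ ( e·α·z^α·ln(1/z) )ⁿ. -/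
open MeasureTheory ProbabilityTheory Real
open scoped ENNReal

lemma meas_ofReal_rpow_neg (s : ℝ) :
    Measurable fun x : ℝ => ENNReal.ofReal (x ^ (-s)) := by measurability

lemma betaFn_one {α : ℝ} (hα : 0 < α) : betaFn α 1 = 1 / α := by
  have hΓ : Real.Gamma (α + 1) = α * Real.Gamma α := Real.Gamma_add_one hα.ne'
  have hΓpos : 0 < Real.Gamma α := Real.Gamma_pos_of_pos hα
  rw [betaFn, Real.Gamma_one, hΓ]
  field_simp

lemma lintegral_prod_of_indep' {Ω ι : Type*} [MeasurableSpace Ω] {μ : Measure Ω}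
    [IsProbabilityMeasure μ] {Y : ι → Ω → ℝ≥0∞} (hY : ∀ i, Measurable (Y i))
    (hind : iIndepFun Y μ) (s : Finset ι) :
    ∫⁻ ω, ∏ i ∈ s, Y i ω ∂μ = ∏ i ∈ s, ∫⁻ ω, Y i ω ∂μ := by
  classical
  induction s using Finset.induction with
  | empty => simp
  | @insert a s hi ih =>
    simp only [Finset.prod_insert hi]
    rw [← ih]
    have hdep : IndepFun (∏ j ∈ s, Y j) (Y a) μ :=
      hind.indepFun_finsetProd_of_notMem hY hi
    have hdep' : IndepFun (fun ω => ∏ i ∈ s, Y i ω) (Y a) μ := by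
      convert hdep using 1; ext ω; simp
    have h := lintegral_mul_eq_lintegral_mul_lintegral_of_indepFun''
      (Finset.measurable_prod s (fun i _ => hY i)).aemeasurable (hY a).aemeasurable hdep'
    rw [mul_comm] at h
    simp only [mul_comm (Y a _)]
    exact h

lemma single_lintegral {Ω : Type*} [MeasurableSpace Ω] (P : Measure Ω) {X : Ω → ℝ}
    (hm : Measurable X) {α s : ℝ} (hα : 0 < α) (hs : s < α)
    (hd : Measure.map X P = volume.withDensity (fun x => ENNReal.ofReal
        (if 0 < x ∧ x < 1 then x ^ (α - 1) * (1 - x) ^ ((1:ℝ) - 1) / betaFn α 1 else 0))) :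
    ∫⁻ ω, ENNReal.ofReal ((X ω) ^ (-s)) ∂P = ENNReal.ofReal (α / (α - s)) := by
  have hgm : Measurable fun x : ℝ => ENNReal.ofReal (x ^ (-s)) := by measurability
  have hρm : Measurable fun x : ℝ => ENNReal.ofReal
      (if 0 < x ∧ x < 1 then x ^ (α - 1) * (1 - x) ^ ((1:ℝ) - 1) / betaFn α 1 else 0) := by
    apply ENNReal.measurable_ofReal.comp
    apply Measurable.ite
    · exact (measurableSet_Ioi.inter measurableSet_Iio :
        MeasurableSet {x : ℝ | 0 < x ∧ x < 1})
    · measurability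
    · exact measurable_const
  rw [← lintegral_map hgm hm, hd, lintegral_withDensity_eq_lintegral_mul _ hρm hgm]
  have hr : (-1:ℝ) < α - s - 1 := by linarith
  have hkey : ∀ x : ℝ, ((fun x : ℝ => ENNReal.ofReal
      (if 0 < x ∧ x < 1 then x ^ (α - 1) * (1 - x) ^ ((1:ℝ) - 1) / betaFn α 1 else 0)) *
      (fun x : ℝ => ENNReal.ofReal (x ^ (-s)))) x
      = (Set.Ioo (0:ℝ) 1).indicator (fun x => ENNReal.ofReal (α * x ^ (α - s - 1))) x := by
    intro x
    simp only [Pi.mul_apply, Set.indicator]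
    by_cases hx : x ∈ Set.Ioo (0:ℝ) 1
    · obtain ⟨hx0, hx1⟩ := hx
      rw [if_pos ⟨hx0, hx1⟩, if_pos ⟨hx0, hx1⟩, betaFn_one hα]
      rw [← ENNReal.ofReal_mul (div_nonneg (mul_nonneg (Real.rpow_nonneg hx0.le _)
        (Real.rpow_nonneg (by linarith) _)) (by positivity))]
      congr 1
      rw [sub_self, Real.rpow_zero]
      rw [show α - s - 1 = (α - 1) + (-s) by ring, Real.rpow_add hx0]
      field_simp
    · rw [if_neg (by simpa [Set.mem_Ioo] using hx), if_neg (by simpa [Set.mem_Ioo] using hx)]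
      simp
  rw [lintegral_congr hkey, lintegral_indicator measurableSet_Ioo _]
  have hint : IntegrableOn (fun x : ℝ => α * x ^ (α - s - 1)) (Set.Ioo 0 1) := by
    have := (intervalIntegral.intervalIntegrable_rpow' (a := 0) (b := 1) hr).const_mul α
    rw [intervalIntegrable_iff_integrableOn_Ioc_of_le (by norm_num)] at this
    exact this.mono_set Set.Ioo_subset_Ioc_self
  rw [← ofReal_integral_eq_lintegral_ofReal hint
    ((ae_restrict_iff' measurableSet_Ioo).2 (Filter.Eventually.of_forall
      fun x hx => mul_nonneg hα.le (Real.rpow_nonneg hx.1.le _)))]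
  congr 1
  rw [← MeasureTheory.integral_Ioc_eq_integral_Ioo,
    ← intervalIntegral.integral_of_le (by norm_num : (0:ℝ) ≤ 1)]
  rw [intervalIntegral.integral_const_mul, integral_rpow (Or.inl hr)]
  rw [Real.one_rpow, Real.zero_rpow (by linarith)]
  field_simp
  rw [sub_zero, show α - s - 1 + 1 = α - s by ring]

/-- Tail bound for the sample mean of `n` i.i.d. Beta(α,1) random variables. -/
theorem beta_one_sample_mean_tail
    {Ω : Type*} [MeasurableSpace Ω] (P : Measure Ω) [IsProbabilityMeasure P]
    (n : ℕ) (hn : 0 < n) (X : Fin n → Ω → ℝ) (α β : ℝ) (hα : 0 < α) (hβ : β = 1)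
    (hmeas : ∀ i, Measurable (X i))
    (hindep : iIndepFun X P)
    (hdist : ∀ i, Measure.map (X i) P =
      volume.withDensity (fun x => ENNReal.ofReal
        (if 0 < x ∧ x < 1 then x ^ (α - 1) * (1 - x) ^ (β - 1) / betaFn α β else 0)))
    (z : ℝ) (hz0 : 0 < z) (hz1 : z < Real.exp (-(1 / α))) :
    P {ω | (∑ i, X i ω) / n ≤ z} ≤
      ENNReal.ofReal ((Real.exp 1 * α * z ^ α * Real.log (1 / z)) ^ n) := by
  subst hβ
  set L : ℝ := Real.log (1 / z) with hLdef
  have hlogz : Real.log z = -L := by rw [hLdef, one_div, Real.log_inv, neg_neg]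
  have hL : 1 / α < L := by
    have h1 : Real.log z < -(1/α) := by
      calc Real.log z < Real.log (Real.exp (-(1/α))) := Real.log_lt_log hz0 hz1
      _ = -(1/α) := Real.log_exp _
    have := h1
    rw [hlogz] at this
    linarith
  have hLpos : 0 < L := lt_trans (by positivity) hL
  set s : ℝ := α - 1 / L with hsdef
  have hs_lt : s < α := by
    have : 0 < 1 / L := by positivity
    rw [hsdef]; linarith
  have h1L : 1 / L < α := by
    rw [div_lt_iff₀ hLpos]
    have := (div_lt_iff₀ hα).mp hL
    nlinarith
  have hs_pos : 0 < s := by rw [hsdef]; linarith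
  have hαs : α - s = 1 / L := by rw [hsdef]; ring
  -- the transformed variables
  set Y : Fin n → Ω → ENNReal := fun i ω => ENNReal.ofReal ((X i ω) ^ (-s)) with hYdef
  have hg : Measurable fun x : ℝ => ENNReal.ofReal (x ^ (-s)) := meas_ofReal_rpow_neg s
  have hYm : ∀ i, Measurable (Y i) := fun i => hg.comp (hmeas i)
  have hYindep : iIndepFun Y P :=
    hindep.comp (fun _ x => ENNReal.ofReal (x ^ (-s))) (fun _ => hg)
  have hsingle : ∀ i, ∫⁻ ω, Y i ω ∂P = ENNReal.ofReal (α * L) := by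
    intro i
    rw [hYdef]
    rw [single_lintegral P (hmeas i) hα hs_lt (hdist i)]
    congr 1
    rw [hαs]
    field_simp
  -- bad set has measure zero
  have hbad : P {ω | ¬ ∀ i, X i ω ∈ Set.Ioo (0:ℝ) 1} = 0 := by
    have heq : {ω | ¬ ∀ i, X i ω ∈ Set.Ioo (0:ℝ) 1}
        = ⋃ i, X i ⁻¹' (Set.Ioo (0:ℝ) 1)ᶜ := by
      ext ω; simp [not_forall]
    rw [heq]
    refine measure_iUnion_null fun i => ?_
    rw [show P (X i ⁻¹' (Set.Ioo (0:ℝ) 1)ᶜ) = Measure.map (X i) P ((Set.Ioo (0:ℝ) 1)ᶜ)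
      from (Measure.map_apply (hmeas i) measurableSet_Ioo.compl).symm]
    rw [hdist i, withDensity_apply _ measurableSet_Ioo.compl]
    rw [setLIntegral_congr_fun measurableSet_Ioo.compl ((fun x hx => by
        rw [if_neg (by simpa [Set.mem_Ioo] using hx), ENNReal.ofReal_zero] :
        ∀ x ∈ (Set.Ioo (0:ℝ) 1)ᶜ, ENNReal.ofReal
          (if 0 < x ∧ x < 1 then x ^ (α - 1) * (1 - x) ^ ((1:ℝ) - 1) / betaFn α 1 else 0)
          = (0:ENNReal)))]
    simp
  -- inclusion into the Markov event
  set c : ENNReal := ENNReal.ofReal ((z ^ n) ^ (-s)) with hcdef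
  have hznpos : (0:ℝ) < z ^ n := pow_pos hz0 n
  have hcpos : (0:ℝ) < (z ^ n) ^ (-s) := Real.rpow_pos_of_pos hznpos _
  have hsub : {ω | (∑ i, X i ω) / n ≤ z} ⊆
      {ω | c ≤ ∏ i, Y i ω} ∪ {ω | ¬ ∀ i, X i ω ∈ Set.Ioo (0:ℝ) 1} := by
    intro ω hω
    by_cases hA : ∀ i, X i ω ∈ Set.Ioo (0:ℝ) 1
    · left
      have hnpos : (0:ℝ) < n := by exact_mod_cast hn
      have hsum : ∑ i, X i ω ≤ z * n := (div_le_iff₀ hnpos).mp hω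
      have hXpos : ∀ i, 0 < X i ω := fun i => (hA i).1
      -- AM-GM
      have hw' : ∑ _i : Fin n, (1 / (n:ℝ)) = 1 := by
        simp [Finset.sum_const, Finset.card_univ]
        field_simp
      have hgm := Real.geom_mean_le_arith_mean_weighted Finset.univ
        (fun _ => 1 / (n:ℝ)) (fun i => X i ω)
        (fun i _ => by positivity) hw' (fun i _ => (hXpos i).le)
      have harith : ∑ i : Fin n, (1 / (n:ℝ)) * X i ω ≤ z := by
        rw [← Finset.mul_sum]
        rw [div_mul_eq_mul_div, one_mul, div_le_iff₀ hnpos]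
        linarith
      have hgmz : ∏ i, (X i ω) ^ (1 / (n:ℝ)) ≤ z := le_trans hgm harith
      have hgm_nonneg : 0 ≤ ∏ i, (X i ω) ^ (1 / (n:ℝ)) :=
        Finset.prod_nonneg fun i _ => Real.rpow_nonneg (hXpos i).le _
      have hprodeq : (∏ i, (X i ω) ^ (1 / (n:ℝ))) ^ n = ∏ i, X i ω := by
        rw [← Finset.prod_pow]
        refine Finset.prod_congr rfl fun i _ => ?_
        rw [← Real.rpow_natCast ((X i ω) ^ (1 / (n:ℝ))) n, ← Real.rpow_mul (hXpos i).le]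
        rw [one_div, inv_mul_cancel₀ (by exact_mod_cast hn.ne' : (n:ℝ) ≠ 0), Real.rpow_one]
      have hprodle : ∏ i, X i ω ≤ z ^ n := by
        rw [← hprodeq]
        exact pow_le_pow_left₀ hgm_nonneg hgmz n
      have hprodpos : 0 < ∏ i, X i ω := Finset.prod_pos fun i _ => hXpos i
      have hkey : (z ^ n) ^ (-s) ≤ (∏ i, X i ω) ^ (-s) :=
        Real.rpow_le_rpow_of_nonpos hprodpos hprodle (neg_nonpos.mpr hs_pos.le)
      have hYprod : ∏ i, Y i ω = ENNReal.ofReal ((∏ i, X i ω) ^ (-s)) := by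
        rw [hYdef]
        rw [← ENNReal.ofReal_prod_of_nonneg (fun i _ => Real.rpow_nonneg (hXpos i).le _)]
        rw [Real.finset_prod_rpow Finset.univ _ (fun i _ => (hXpos i).le)]
      show c ≤ ∏ i, Y i ω
      rw [hYprod, hcdef]
      exact ENNReal.ofReal_le_ofReal hkey
    · right; exact hA
  -- Markov
  have hmarkov : P {ω | c ≤ ∏ i, Y i ω} ≤ (∫⁻ ω, ∏ i, Y i ω ∂P) / c := by
    refine meas_ge_le_lintegral_div ?_ ?_ ?_
    · exact (Finset.measurable_prod Finset.univ fun i _ => hYm i).aemeasurable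
    · rw [hcdef]; simp [ENNReal.ofReal_eq_zero, not_le, hcpos]
    · rw [hcdef]; exact ENNReal.ofReal_ne_top
  have hlint : ∫⁻ ω, ∏ i, Y i ω ∂P = ENNReal.ofReal ((α * L) ^ n) := by
    rw [lintegral_prod_of_indep' hYm hYindep Finset.univ]
    rw [Finset.prod_congr rfl fun i _ => hsingle i]
    rw [Finset.prod_const, Finset.card_univ, Fintype.card_fin]
    rw [← ENNReal.ofReal_pow (by positivity)]
  calc P {ω | (∑ i, X i ω) / n ≤ z}
      ≤ P ({ω | c ≤ ∏ i, Y i ω} ∪ {ω | ¬ ∀ i, X i ω ∈ Set.Ioo (0:ℝ) 1}) :=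
        measure_mono hsub
    _ ≤ P {ω | c ≤ ∏ i, Y i ω} + P {ω | ¬ ∀ i, X i ω ∈ Set.Ioo (0:ℝ) 1} :=
        measure_union_le _ _
    _ = P {ω | c ≤ ∏ i, Y i ω} := by rw [hbad, add_zero]
    _ ≤ (∫⁻ ω, ∏ i, Y i ω ∂P) / c := hmarkov
    _ = ENNReal.ofReal ((α * L) ^ n / (z ^ n) ^ (-s)) := by
        rw [hlint, hcdef, ← ENNReal.ofReal_div_of_pos hcpos]
    _ = ENNReal.ofReal ((Real.exp 1 * α * z ^ α * L) ^ n) := by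
        congr 1
        have h1 : ((z:ℝ) ^ n) ^ (-s) = (z ^ (-s)) ^ n := by
          rw [← Real.rpow_natCast z n, ← Real.rpow_mul hz0.le,
            mul_comm, Real.rpow_mul hz0.le, Real.rpow_natCast]
        have hzs : z ^ s = z ^ α * Real.exp 1 := by
          rw [Real.rpow_def_of_pos hz0, Real.rpow_def_of_pos hz0, ← Real.exp_add]
          congr 1
          rw [hlogz, hsdef]
          field_simp
          ring
        rw [h1, div_eq_mul_inv, ← inv_pow, ← mul_pow]
        congr 1
        rw [Real.rpow_neg hz0.le, inv_inv, hzs]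
        ring
end

section
/- Let X₁, …, Xₙ be i.i.d. random variables with the inverse gamma distribution of parameters α > 0 and β > 0, and let X̄ₙ = (1/n)∑_{i=1}^n Xᵢ. Then: (i) if α > 1 and 0 < z ≤ β/(α−1), Pr{X̄ₙ ≤ z} ≤ [ (Γ(β/z + 1)/Γ(α)) · (z/β)^{β/z − α + 1} ]ⁿ; (ii) if 0 < z ≤ β/α, Pr{X̄ₙ ≤ z} ≤ [ (β/(αz))^α · exp((αz−β)/z) ]ⁿ. -/
open MeasureTheory ProbabilityTheory Real
open scoped ENNReal NNReal

section InvGammaAux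
open Set

private lemma ig_aux_exp_rpow {a r : ℝ} (ha : 0 < a) (hr : 0 < r) :
    IntegrableOn (fun y : ℝ => y ^ (a - 1) * exp (-(r * y))) (Ioi 0) := by
  have h := Real.GammaIntegral_convergent ha
  have h2 := (integrableOn_Ioi_comp_mul_left_iff (fun x => exp (-x) * x ^ (a - 1)) 0 hr).mpr
    (by simpa using h)
  have h3 := h2.const_mul (r ^ (a - 1))⁻¹
  apply IntegrableOn.congr_fun h3 ?_ measurableSet_Ioi
  intro x hx
  rw [mem_Ioi] at hx
  simp only []
  rw [mul_rpow hr.le hx.le]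
  have : (r : ℝ) ^ (a - 1) ≠ 0 := (rpow_pos_of_pos hr _).ne'
  field_simp

private lemma ig_aux_key_fun {a c : ℝ} {x : ℝ} (hx : 0 < x) :
    ((|(-1:ℝ)| * x ^ ((-1:ℝ) - 1)) • ((x ^ (-1:ℝ)) ^ (a - 1) * exp (-(c * x ^ (-1:ℝ)))))
      = x ^ (-a - 1) * exp (-c / x) := by
  rw [abs_neg, abs_one, one_mul, smul_eq_mul, rpow_neg_one, inv_rpow hx.le, ← rpow_neg hx.le,
    ← mul_assoc, ← rpow_add hx]
  ring_nf

private lemma ig_aux_main_int {a c : ℝ} (ha : 0 < a) (hc : 0 < c) :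
    IntegrableOn (fun x : ℝ => x ^ (-a - 1) * exp (-c / x)) (Ioi 0) ∧
    ∫ x in Ioi 0, x ^ (-a - 1) * exp (-c / x) = (1 / c) ^ a * Gamma a := by
  set f : ℝ → ℝ := fun y => y ^ (a - 1) * exp (-(c * y)) with hf
  have hfi : IntegrableOn f (Ioi 0) := ig_aux_exp_rpow ha hc
  constructor
  · have := (integrableOn_Ioi_comp_rpow_iff f (p := -1) (by norm_num)).mpr hfi
    apply IntegrableOn.congr_fun this ?_ measurableSet_Ioi
    intro x hx
    exact ig_aux_key_fun hx
  · rw [← integral_rpow_mul_exp_neg_mul_Ioi ha hc,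
      ← integral_comp_rpow_Ioi f (p := -1) (by norm_num)]
    refine setIntegral_congr_fun measurableSet_Ioi fun x hx => ?_
    exact (ig_aux_key_fun hx).symm

noncomputable def igd (α β : ℝ) (x : ℝ) : ℝ :=
  if 0 < x then β ^ α / Real.Gamma α * x ^ (-α - 1) * Real.exp (-β / x) else 0

lemma igd_nonneg {α β : ℝ} (hα : 0 < α) (hβ : 0 < β) (x : ℝ) : 0 ≤ igd α β x := by
  unfold igd; split_ifs with h
  · have := Real.Gamma_pos_of_pos hα
    positivity
  · exact le_refl 0

lemma igd_meas (α β : ℝ) : Measurable (igd α β) := by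
  unfold igd
  apply Measurable.ite measurableSet_Ioi ?_ measurable_const
  fun_prop

variable {Ω : Type*} [MeasurableSpace Ω] {P : Measure Ω} [IsProbabilityMeasure P]

lemma igd_transfer_integral {α β : ℝ} (hα : 0 < α) (hβ : 0 < β) {T : Ω → ℝ}
    (hT : Measurable T)
    (hd : Measure.map T P = volume.withDensity (fun x => ENNReal.ofReal (igd α β x)))
    {F : ℝ → ℝ} (hF : Measurable F) :
    (∫ ω, F (T ω) ∂P = ∫ x in Ioi 0, igd α β x * F x) ∧
    (Integrable (fun ω => F (T ω)) P ↔
      IntegrableOn (fun x => F x * igd α β x) (Ioi 0) volume) := by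
  have hnn := igd_nonneg hα hβ
  have hmeas := igd_meas α β
  have hcoe : (fun x => ENNReal.ofReal (igd α β x)) =
      (fun x => ((fun y => (igd α β y).toNNReal) x : ℝ≥0∞)) := rfl
  have hind : ∀ (G : ℝ → ℝ), (fun x => igd α β x * G x) =
      (Ioi (0:ℝ)).indicator (fun x => igd α β x * G x) := by
    intro G
    ext x
    by_cases h : x ∈ Ioi (0:ℝ)
    · rw [indicator_of_mem h]
    · rw [indicator_of_notMem h]
      rw [mem_Ioi, not_lt] at h
      simp [igd, not_lt.mpr h]
  have hind2 : (fun x => F x * igd α β x) =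
      (Ioi (0:ℝ)).indicator (fun x => F x * igd α β x) := by
    ext x
    by_cases h : x ∈ Ioi (0:ℝ)
    · rw [indicator_of_mem h]
    · rw [indicator_of_notMem h]
      rw [mem_Ioi, not_lt] at h
      simp [igd, not_lt.mpr h]
  constructor
  · have h1 : (fun x => (igd α β x).toNNReal • F x) = fun x => igd α β x * F x := by
      ext x; rw [NNReal.smul_def, Real.coe_toNNReal _ (hnn x), smul_eq_mul]
    calc ∫ ω, F (T ω) ∂P = ∫ x, F x ∂(Measure.map T P) :=
          (integral_map hT.aemeasurable hF.aestronglyMeasurable).symm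
      _ = ∫ x, (igd α β x).toNNReal • F x := by
          rw [hd, hcoe, integral_withDensity_eq_integral_smul (by fun_prop) F]
      _ = ∫ x, (Ioi (0:ℝ)).indicator (fun x => igd α β x * F x) x := by
          rw [h1, ← hind F]
      _ = ∫ x in Ioi 0, igd α β x * F x := integral_indicator measurableSet_Ioi
  · have hiff : Integrable (fun ω => F (T ω)) P ↔ Integrable F (Measure.map T P) :=
      (integrable_map_measure hF.aestronglyMeasurable hT.aemeasurable).symm
    refine hiff.trans ?_
    rw [hd, integrable_withDensity_iff (by fun_prop)
      (ae_of_all _ fun x => ENNReal.ofReal_lt_top)]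
    have h2 : (fun x => F x * (ENNReal.ofReal (igd α β x)).toReal) =
        fun x => F x * igd α β x := funext fun x => by rw [ENNReal.toReal_ofReal (hnn x)]
    rw [h2]
    exact ⟨fun h => h.integrableOn, fun h => by
      rw [hind2]; exact (integrable_indicator_iff measurableSet_Ioi).mpr h⟩

lemma igd_pos_ae {α β : ℝ} {T : Ω → ℝ} (hT : Measurable T)
    (hd : Measure.map T P = volume.withDensity (fun x => ENNReal.ofReal (igd α β x))) :
    ∀ᵐ ω ∂P, 0 < T ω := by
  rw [ae_iff]
  have h0 : {ω | ¬ 0 < T ω} = T ⁻¹' (Iic 0) := by ext ω; simp [not_lt]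
  rw [h0, ← Measure.map_apply hT measurableSet_Iic, hd,
    withDensity_apply _ measurableSet_Iic]
  rw [setLIntegral_congr_fun (g := fun _ => 0) measurableSet_Iic
    (fun x (hx : x ≤ 0) => by simp [igd, not_lt.mpr hx])]
  simp

lemma ig_amgm_helper {n : ℕ} (hn : 0 < n) {x : Fin n → ℝ} (hx : ∀ i, 0 < x i) {z : ℝ}
    (hz : 0 < z) (hsum : ∑ i, x i ≤ n * z) :
    (∑ i, Real.log (x i) ≤ n * Real.log z) ∧ ((n : ℝ) / z ≤ ∑ i, (x i)⁻¹) := by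
  have hn' : (0:ℝ) < n := by exact_mod_cast hn
  set w : Fin n → ℝ := fun _ => 1 / n with hw
  have hwnn : ∀ i ∈ Finset.univ, 0 ≤ w i := fun i _ => by positivity
  have hw1 : ∑ i, w i = 1 := by
    simp [hw, Finset.sum_const, Finset.card_univ]
    field_simp
  set G : ℝ := ∏ i, x i ^ ((1:ℝ) / n) with hG
  have hGpos : 0 < G := Finset.prod_pos fun i _ => rpow_pos_of_pos (hx i) _
  have hGz : G ≤ z := by
    refine (Real.geom_mean_le_arith_mean_weighted Finset.univ w x hwnn hw1
      (fun i _ => (hx i).le)).trans ?_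
    have h5 : ∑ i, w i * x i = (1 / n) * ∑ i, x i := by
      rw [Finset.mul_sum]
    rw [h5, div_mul_eq_mul_div, one_mul, div_le_iff₀ hn', mul_comm]
    linarith
  have hlogG : Real.log G = (1 / n) * ∑ i, Real.log (x i) := by
    rw [hG, Real.log_prod (fun i _ => (rpow_pos_of_pos (hx i) _).ne')]
    rw [Finset.mul_sum]
    exact Finset.sum_congr rfl fun i _ => Real.log_rpow (hx i) _
  constructor
  · have h1 : Real.log G ≤ Real.log z := Real.log_le_log hGpos hGz
    rw [hlogG] at h1
    rw [div_mul_eq_mul_div, one_mul, div_le_iff₀ hn', mul_comm] at h1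
    linarith [h1]
  · have h2 := Real.geom_mean_le_arith_mean_weighted Finset.univ w (fun i => (x i)⁻¹) hwnn hw1
      (fun i _ => (inv_pos.mpr (hx i)).le)
    have hL : ∏ i, ((x i)⁻¹) ^ w i = G⁻¹ := by
      rw [hG, ← Finset.prod_inv_distrib]
      exact Finset.prod_congr rfl fun i _ => inv_rpow (hx i).le _
    rw [hL] at h2
    have hzG : z⁻¹ ≤ G⁻¹ := inv_anti₀ hGpos hGz
    have h3 : z⁻¹ ≤ ∑ i, w i * (x i)⁻¹ := hzG.trans h2
    have h4 : ∑ i, w i * (x i)⁻¹ = (1 / n) * ∑ i, (x i)⁻¹ := by rw [Finset.mul_sum]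
    rw [h4] at h3
    rw [div_le_iff₀ hz]
    rw [div_mul_eq_mul_div, one_mul, le_div_iff₀ hn'] at h3
    have hinv : z⁻¹ * z = 1 := inv_mul_cancel₀ hz.ne'
    nlinarith [mul_le_mul_of_nonneg_right h3 hz.le, hinv]

lemma ig_chernoff_core (P : Measure Ω) [IsProbabilityMeasure P]
    {n : ℕ} (X : Fin n → Ω → ℝ) {α β : ℝ} (hα : 0 < α) (hβ : 0 < β)
    (hmeas : ∀ i, Measurable (X i))
    (hindep : iIndepFun X P)
    (hdist : ∀ i, Measure.map (X i) P =
      volume.withDensity (fun x => ENNReal.ofReal (igd α β x)))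
    (g : ℝ → ℝ) (hg : Measurable g) {t : ℝ} (ht : 0 ≤ t) (ε V : ℝ)
    (hint : IntegrableOn (fun x => Real.exp (t * g x) * igd α β x) (Ioi 0) volume)
    (hval : ∫ x in Ioi 0, igd α β x * Real.exp (t * g x) = V) :
    (P {ω | ε ≤ ∑ i, g (X i ω)}).toReal ≤ Real.exp (-t * ε) * V ^ n := by
  set Y : Fin n → Ω → ℝ := fun i => g ∘ X i with hY
  have hYmeas : ∀ i, Measurable (Y i) := fun i => hg.comp (hmeas i)
  have hYindep : iIndepFun Y P := hindep.comp _ (fun _ => hg)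
  have hF : Measurable (fun x => Real.exp (t * g x)) := (hg.const_mul t).exp
  have hYint : ∀ i, Integrable (fun ω => Real.exp (t * Y i ω)) P := fun i =>
    ((igd_transfer_integral hα hβ (hmeas i) (hdist i) hF).2).mpr hint
  have hmgf : ∀ i, mgf (Y i) P t = V := fun i => by
    rw [mgf]
    exact ((igd_transfer_integral hα hβ (hmeas i) (hdist i) hF).1).trans hval
  have hSint : Integrable (fun ω => Real.exp (t * (∑ i, Y i) ω)) P :=
    hYindep.integrable_exp_mul_sum hYmeas (fun i _ => hYint i)
  have hcher := measure_ge_le_exp_mul_mgf (X := ∑ i, Y i) (μ := P) ε ht hSint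
  rw [hYindep.mgf_sum hYmeas] at hcher
  have hprod : ∏ i, mgf (Y i) P t = V ^ n := by
    rw [Finset.prod_congr rfl (fun i _ => hmgf i), Finset.prod_const, Finset.card_univ,
      Fintype.card_fin]
  rw [hprod] at hcher
  have hset : {ω | ε ≤ ∑ i, g (X i ω)} = {ω | ε ≤ (∑ i, Y i) ω} := by
    ext ω; simp [hY, Finset.sum_apply]
  rw [hset]
  exact hcher

end InvGammaAux

/-- Lower tail bounds for the sample mean of `n` i.i.d. inverse gamma random variables
with parameters `α > 0`, `β > 0`. -/
theorem inverseGamma_sample_mean_tail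
    {Ω : Type*} [MeasurableSpace Ω] (P : Measure Ω) [IsProbabilityMeasure P]
    (n : ℕ) (hn : 0 < n) (X : Fin n → Ω → ℝ) (α β : ℝ) (hα : 0 < α) (hβ : 0 < β)
    (hmeas : ∀ i, Measurable (X i))
    (hindep : iIndepFun X P)
    (hdist : ∀ i, Measure.map (X i) P =
      volume.withDensity (fun x => ENNReal.ofReal
        (if 0 < x then β ^ α / Real.Gamma α * x ^ (-α - 1) * Real.exp (-β / x) else 0)))
    (z : ℝ) :
    (1 < α → 0 < z → z ≤ β / (α - 1) →
      P {ω | (∑ i, X i ω) / n ≤ z} ≤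
        ENNReal.ofReal
          ((Real.Gamma (β / z + 1) / Real.Gamma α * (z / β) ^ (β / z - α + 1)) ^ n)) ∧
    (0 < z → z ≤ β / α →
      P {ω | (∑ i, X i ω) / n ≤ z} ≤
        ENNReal.ofReal
          (((β / (α * z)) ^ α * Real.exp ((α * z - β) / z)) ^ n)) := by
  have hdist' : ∀ i, Measure.map (X i) P =
      volume.withDensity (fun x => ENNReal.ofReal (igd α β x)) := hdist
  have hpos : ∀ᵐ ω ∂P, ∀ i, 0 < X i ω :=
    ae_all_iff.mpr fun i => igd_pos_ae (hmeas i) (hdist' i)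
  have hn' : (0:ℝ) < n := by exact_mod_cast hn
  have hΓα : 0 < Real.Gamma α := Real.Gamma_pos_of_pos hα
  set c : ℝ := β ^ α / Real.Gamma α with hc
  have hcpos : 0 < c := by positivity
  constructor
  · -- bound (i)
    intro hα1 hz hzb
    set s : ℝ := β / z - α + 1 with hs
    have hα1' : 0 < α - 1 := by linarith
    have hβz : α - 1 ≤ β / z := by
      rw [le_div_iff₀ hz]
      have := (le_div_iff₀ hα1').mp hzb
      nlinarith [this]
    have hspos : 0 ≤ s := by rw [hs]; linarith
    have ha' : 0 < α + s := by
      have h7 : α + s = β / z + 1 := by rw [hs]; ring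
      rw [h7]; positivity
    set V : ℝ := c * ((1 / β) ^ (α + s) * Real.Gamma (α + s)) with hV
    have hid : ∀ x ∈ Set.Ioi (0:ℝ), igd α β x * Real.exp (s * (-Real.log x)) =
        c * (x ^ (-(α + s) - 1) * Real.exp (-β / x)) := by
      intro x hx
      rw [Set.mem_Ioi] at hx
      have hgx : Real.exp (s * (-Real.log x)) = x ^ (-s) := by
        rw [rpow_def_of_pos hx]; ring_nf
      have hrp : x ^ (-α - 1) * x ^ (-s) = x ^ (-(α + s) - 1) := by
        rw [← rpow_add hx]; congr 1; ring
      rw [igd, if_pos hx, hgx, ← hc]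
      calc c * x ^ (-α - 1) * Real.exp (-β / x) * x ^ (-s)
          = c * (x ^ (-α - 1) * x ^ (-s) * Real.exp (-β / x)) := by ring
        _ = c * (x ^ (-(α + s) - 1) * Real.exp (-β / x)) := by rw [hrp]
    have hval : ∫ x in Set.Ioi 0, igd α β x * Real.exp (s * (-Real.log x)) = V := by
      rw [setIntegral_congr_fun measurableSet_Ioi hid, integral_const_mul,
        (ig_aux_main_int ha' hβ).2, hV]
    have hint : IntegrableOn (fun x => Real.exp (s * (-Real.log x)) * igd α β x)
        (Set.Ioi 0) volume := by
      have := ((ig_aux_main_int ha' hβ).1).const_mul c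
      apply IntegrableOn.congr_fun this ?_ measurableSet_Ioi
      intro x hx
      show c * (x ^ (-(α + s) - 1) * Real.exp (-β / x)) =
        Real.exp (s * (-Real.log x)) * igd α β x
      rw [← hid x hx]; ring
    have hcher := ig_chernoff_core P X hα hβ hmeas hindep hdist'
      (fun x => -Real.log x) (measurable_log.neg) hspos (-(n * Real.log z)) V hint hval
    have hsub : ∀ᵐ ω ∂P, ω ∈ {ω | (∑ i, X i ω) / n ≤ z} →
        ω ∈ {ω | -(↑n * Real.log z) ≤ ∑ i, -Real.log (X i ω)} := by
      filter_upwards [hpos] with ω hω hmem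
      have hsum : ∑ i, X i ω ≤ n * z := by
        rw [div_le_iff₀ hn'] at hmem; linarith
      have h8 := (ig_amgm_helper hn (fun i => hω i) hz hsum).1
      rw [Finset.sum_neg_distrib]
      linarith
    have halg : Real.exp (-s * -(↑n * Real.log z)) * V ^ n =
        (Real.Gamma (β / z + 1) / Real.Gamma α * (z / β) ^ (β / z - α + 1)) ^ n := by
      have h9 : -s * -(↑n * Real.log z) = n * (s * Real.log z) := by ring
      rw [h9, Real.exp_nat_mul, ← mul_pow]
      congr 1
      have hez : Real.exp (s * Real.log z) = z ^ s := by
        rw [rpow_def_of_pos hz]; ring_nf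
      have hαs : α + s = β / z + 1 := by rw [hs]; ring
      rw [hez, hV, hαs, ← hs, hc]
      have e1 : ((1:ℝ) / β) ^ (β / z + 1) = (β ^ (β / z + 1))⁻¹ := by
        rw [one_div, inv_rpow hβ.le]
      have e2 : (z / β) ^ s = z ^ s / β ^ s := div_rpow hz.le hβ.le s
      have e3 : β ^ α * (β ^ (β / z + 1))⁻¹ = (β ^ s)⁻¹ := by
        rw [← rpow_neg hβ.le, ← rpow_add hβ, ← rpow_neg hβ.le]
        congr 1
        rw [hs]; ring
      rw [e1, e2]
      calc z ^ s * (β ^ α / Real.Gamma α * ((β ^ (β / z + 1))⁻¹ * Real.Gamma (β / z + 1)))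
          = Real.Gamma (β / z + 1) / Real.Gamma α *
              (z ^ s * (β ^ α * (β ^ (β / z + 1))⁻¹)) := by ring
        _ = Real.Gamma (β / z + 1) / Real.Gamma α * (z ^ s * (β ^ s)⁻¹) := by rw [e3]
        _ = Real.Gamma (β / z + 1) / Real.Gamma α * (z ^ s / β ^ s) := by ring
    calc P {ω | (∑ i, X i ω) / n ≤ z}
        ≤ P {ω | -(↑n * Real.log z) ≤ ∑ i, -Real.log (X i ω)} := measure_mono_ae hsub
      _ ≤ ENNReal.ofReal
          ((Real.Gamma (β / z + 1) / Real.Gamma α * (z / β) ^ (β / z - α + 1)) ^ n) := by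
          rw [← ENNReal.ofReal_toReal (measure_ne_top P _)]
          exact ENNReal.ofReal_le_ofReal (hcher.trans (le_of_eq halg))
  · -- bound (ii)
    intro hz hzb
    have hazpos : 0 < α * z := by positivity
    have htnn : 0 ≤ β - α * z := by
      have h6 := (le_div_iff₀ hα).mp hzb
      nlinarith
    set t : ℝ := β - α * z with htd
    set V : ℝ := c * ((1 / (α * z)) ^ α * Real.Gamma α) with hV
    have hid : ∀ x ∈ Set.Ioi (0:ℝ), igd α β x * Real.exp (t * x⁻¹) =
        c * (x ^ (-α - 1) * Real.exp (-(α * z) / x)) := by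
      intro x hx
      rw [Set.mem_Ioi] at hx
      have hxne : x ≠ 0 := hx.ne'
      have hexp : Real.exp (-β / x) * Real.exp (t * x⁻¹) = Real.exp (-(α * z) / x) := by
        rw [← Real.exp_add]
        congr 1
        rw [htd]
        field_simp
        ring
      rw [igd, if_pos hx, ← hc]
      calc c * x ^ (-α - 1) * Real.exp (-β / x) * Real.exp (t * x⁻¹)
          = c * (x ^ (-α - 1) * (Real.exp (-β / x) * Real.exp (t * x⁻¹))) := by ring
        _ = c * (x ^ (-α - 1) * Real.exp (-(α * z) / x)) := by rw [hexp]
    have hval : ∫ x in Set.Ioi 0, igd α β x * Real.exp (t * x⁻¹) = V := by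
      rw [setIntegral_congr_fun measurableSet_Ioi hid, integral_const_mul,
        (ig_aux_main_int hα hazpos).2, hV]
    have hint : IntegrableOn (fun x => Real.exp (t * x⁻¹) * igd α β x)
        (Set.Ioi 0) volume := by
      have := ((ig_aux_main_int hα hazpos).1).const_mul c
      apply IntegrableOn.congr_fun this ?_ measurableSet_Ioi
      intro x hx
      show c * (x ^ (-α - 1) * Real.exp (-(α * z) / x)) =
        Real.exp (t * x⁻¹) * igd α β x
      rw [← hid x hx]; ring
    have hcher := ig_chernoff_core P X hα hβ hmeas hindep hdist'
      (fun x => x⁻¹) measurable_inv htnn (↑n / z) V hint hval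
    have hsub : ∀ᵐ ω ∂P, ω ∈ {ω | (∑ i, X i ω) / n ≤ z} →
        ω ∈ {ω | (↑n : ℝ) / z ≤ ∑ i, (X i ω)⁻¹} := by
      filter_upwards [hpos] with ω hω hmem
      have hsum : ∑ i, X i ω ≤ n * z := by
        rw [div_le_iff₀ hn'] at hmem; linarith
      exact (ig_amgm_helper hn (fun i => hω i) hz hsum).2
    have halg : Real.exp (-t * (↑n / z)) * V ^ n =
        ((β / (α * z)) ^ α * Real.exp ((α * z - β) / z)) ^ n := by
      have h9 : -t * (↑n / z) = ↑n * ((α * z - β) / z) := by rw [htd]; ring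
      rw [h9, Real.exp_nat_mul, ← mul_pow]
      congr 1
      have e1 : ((1:ℝ) / (α * z)) ^ α = ((α * z) ^ α)⁻¹ := by
        rw [one_div, inv_rpow hazpos.le]
      have e2 : (β / (α * z)) ^ α = β ^ α / (α * z) ^ α := div_rpow hβ.le hazpos.le α
      rw [hV, hc, e1, e2]
      have hne : ((α * z) ^ α : ℝ) ≠ 0 := (rpow_pos_of_pos hazpos α).ne'
      field_simp
    calc P {ω | (∑ i, X i ω) / n ≤ z}
        ≤ P {ω | (↑n : ℝ) / z ≤ ∑ i, (X i ω)⁻¹} := measure_mono_ae hsub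
      _ ≤ ENNReal.ofReal (((β / (α * z)) ^ α * Real.exp ((α * z - β) / z)) ^ n) := by
          rw [← ENNReal.ofReal_toReal (measure_ne_top P _)]
          exact ENNReal.ofReal_le_ofReal (hcher.trans (le_of_eq halg))
end

section
/- Let X₁, …, Xₙ be i.i.d. random variables with the inverse Gaussian distribution of parameters λ > 0 and θ > 0, and let X̄ₙ = (1/n)∑_{i=1}^n Xᵢ. Then for all z with 0 < z ≤ θ, Pr{X̄ₙ ≤ z} ≤ [ exp( λ/θ − λ/(2z) − λz/(2θ²) ) ]ⁿ. -/
open MeasureTheory ProbabilityTheory Real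

open Set

lemma cov1 (a b : ℝ) (ha : 0 < a) (hb : 0 < b) :
    ∫ x in Ioi (0:ℝ), (Real.sqrt a/(2*x*Real.sqrt x) + Real.sqrt b/(2*Real.sqrt x))
      * Real.exp (-(a/x) - b*x)
    = Real.sqrt π * Real.exp (-(2*Real.sqrt (a*b))) := by
  have hsa : 0 < Real.sqrt a := Real.sqrt_pos.mpr ha
  have hsb : 0 < Real.sqrt b := Real.sqrt_pos.mpr hb
  set u : ℝ → ℝ := fun x => Real.sqrt a / Real.sqrt x - Real.sqrt b * Real.sqrt x with hu
  have hderiv : ∀ x ∈ Ioi (0:ℝ), HasDerivWithinAt u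
      (-(Real.sqrt a/(2*x*Real.sqrt x) + Real.sqrt b/(2*Real.sqrt x))) (Ioi 0) x := by
    intro x hx
    have hx0 : (0:ℝ) < x := hx
    have hsx : 0 < Real.sqrt x := Real.sqrt_pos.mpr hx0
    have h1 : HasDerivAt (fun y : ℝ => Real.sqrt a / Real.sqrt y)
        ((0 * Real.sqrt x - Real.sqrt a * (1/(2*Real.sqrt x))) / (Real.sqrt x)^2) x :=
      (hasDerivAt_const x (Real.sqrt a)).div (Real.hasDerivAt_sqrt hx0.ne') hsx.ne'
    have h2 : HasDerivAt (fun y : ℝ => Real.sqrt b * Real.sqrt y)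
        (Real.sqrt b * (1/(2*Real.sqrt x))) x :=
      (Real.hasDerivAt_sqrt hx0.ne').const_mul (Real.sqrt b)
    have := (h1.sub h2).hasDerivWithinAt (s := Ioi (0:ℝ))
    refine this.congr_deriv ?_
    have hxx : Real.sqrt x ^ 2 = x := Real.sq_sqrt hx0.le
    field_simp
    nlinarith [hxx, hsx]
  have hinj : InjOn u (Ioi (0:ℝ)) := by
    have : StrictAntiOn u (Ioi (0:ℝ)) := by
      intro x hx y hy hxy
      have hx0 : (0:ℝ) < x := hx
      have hy0 : (0:ℝ) < y := hy
      have hs : Real.sqrt x < Real.sqrt y := Real.sqrt_lt_sqrt hx0.le hxy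
      have hsx : 0 < Real.sqrt x := Real.sqrt_pos.mpr hx0
      have h1 : Real.sqrt a / Real.sqrt y < Real.sqrt a / Real.sqrt x :=
        div_lt_div_of_pos_left hsa hsx hs
      have h2 : Real.sqrt b * Real.sqrt x < Real.sqrt b * Real.sqrt y :=
        (mul_lt_mul_iff_right₀ hsb).mpr hs
      simp only [hu]
      linarith
    exact this.injOn
  have himg : u '' Ioi (0:ℝ) = univ := by
    apply eq_univ_of_forall
    intro v
    obtain ⟨D, hD⟩ : ∃ D, D = Real.sqrt (v^2 + 4*(Real.sqrt a * Real.sqrt b)) := ⟨_, rfl⟩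
    have hD2 : D^2 = v^2 + 4*(Real.sqrt a * Real.sqrt b) := by
      rw [hD]; exact Real.sq_sqrt (by positivity)
    have hDnn : 0 ≤ D := hD ▸ Real.sqrt_nonneg _
    have hDpos : v < D := by
      nlinarith [hD2, mul_pos hsa hsb, hDnn]
    obtain ⟨s, hs⟩ : ∃ s, s = (-v + D)/(2*Real.sqrt b) := ⟨_, rfl⟩
    have hs0 : 0 < s := by
      rw [hs]; exact div_pos (by linarith) (by positivity)
    refine ⟨s^2, mem_Ioi.mpr (pow_pos hs0 2), ?_⟩
    have hss : Real.sqrt (s^2) = s := Real.sqrt_sq hs0.le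
    have hkey : Real.sqrt b * s^2 + v * s = Real.sqrt a := by
      have hD' : D = s * (2*Real.sqrt b) + v := by
        rw [hs]; field_simp; ring
      have expand : 4*(Real.sqrt b)^2*s^2 + 4*Real.sqrt b*s*v
          = 4*(Real.sqrt a)*(Real.sqrt b) := by
        have hb2 : (Real.sqrt b)^2 = b := Real.sq_sqrt hb.le
        nlinarith [hD2, hD']
      have h4s : (4*Real.sqrt b) * (Real.sqrt b * s^2 + v*s)
          = (4*Real.sqrt b) * Real.sqrt a := by linear_combination expand
      exact mul_left_cancel₀ (by positivity) h4s
    simp only [hu, hss]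
    field_simp
    linear_combination -hkey
  have hcv := integral_image_eq_integral_abs_deriv_smul measurableSet_Ioi hderiv hinj
      (fun v => Real.exp (-v^2))
  rw [himg, Measure.restrict_univ] at hcv
  have hgauss : ∫ v : ℝ, Real.exp (-v^2) = Real.sqrt π := by
    have := integral_gaussian (1:ℝ)
    simpa using this
  rw [hgauss] at hcv
  have hre : ∀ x ∈ Ioi (0:ℝ),
      |(-(Real.sqrt a/(2*x*Real.sqrt x) + Real.sqrt b/(2*Real.sqrt x)))| • Real.exp (-(u x)^2)
      = ((Real.sqrt a/(2*x*Real.sqrt x) + Real.sqrt b/(2*Real.sqrt x))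
          * Real.exp (-(a/x) - b*x)) * Real.exp (2*Real.sqrt (a*b)) := by
    intro x hx
    have hx0 : (0:ℝ) < x := hx
    have hsx : 0 < Real.sqrt x := Real.sqrt_pos.mpr hx0
    have habs : |(-(Real.sqrt a/(2*x*Real.sqrt x) + Real.sqrt b/(2*Real.sqrt x)))|
        = Real.sqrt a/(2*x*Real.sqrt x) + Real.sqrt b/(2*Real.sqrt x) := by
      rw [abs_neg, abs_of_pos]
      positivity
    have hu2 : (u x)^2 = a/x + b*x - 2*Real.sqrt (a*b) := by
      simp only [hu]
      have h1 : Real.sqrt a ^ 2 = a := Real.sq_sqrt ha.le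
      have h2 : Real.sqrt b ^ 2 = b := Real.sq_sqrt hb.le
      have h3 : Real.sqrt x ^ 2 = x := Real.sq_sqrt hx0.le
      have h4 : Real.sqrt (a*b) = Real.sqrt a * Real.sqrt b := Real.sqrt_mul ha.le b
      rw [sub_sq, div_pow, mul_pow, h1, h2, h3, h4]
      field_simp
      ring
    rw [habs, hu2, smul_eq_mul]
    rw [show -(a/x + b*x - 2*Real.sqrt (a*b)) = (-(a/x) - b*x) + 2*Real.sqrt (a*b) by ring,
      Real.exp_add]
    ring
  rw [setIntegral_congr_fun measurableSet_Ioi hre] at hcv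
  rw [integral_mul_const] at hcv
  have hep : 0 < Real.exp (2*Real.sqrt (a*b)) := Real.exp_pos _
  rw [Real.exp_neg]
  rw [hcv, mul_inv_cancel_right₀ hep.ne']

lemma cov2 (a b : ℝ) (ha : 0 < a) (hb : 0 < b) :
    ∫ x in Ioi (0:ℝ), Real.exp (-(a/x) - b*x) / Real.sqrt x
    = Real.sqrt (a/b) * ∫ x in Ioi (0:ℝ), Real.exp (-(a/x) - b*x) / (x * Real.sqrt x) := by
  have hab : 0 < a/b := div_pos ha hb
  set f : ℝ → ℝ := fun x => (a/b) * x⁻¹ with hf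
  have hderiv : ∀ x ∈ Ioi (0:ℝ), HasDerivWithinAt f ((a/b) * (-(x^2)⁻¹)) (Ioi 0) x := by
    intro x hx
    have hx0 : (0:ℝ) < x := hx
    exact ((hasDerivAt_inv hx0.ne').const_mul (a/b)).hasDerivWithinAt
  have hinj : InjOn f (Ioi (0:ℝ)) := by
    intro x hx y hy h
    have := mul_left_cancel₀ hab.ne' h
    exact inv_injective this
  have himg : f '' Ioi (0:ℝ) = Ioi (0:ℝ) := by
    ext v
    constructor
    · rintro ⟨x, hx, rfl⟩
      have hx0 : (0:ℝ) < x := hx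
      exact mem_Ioi.mpr (by positivity)
    · intro hv
      have hv0 : (0:ℝ) < v := hv
      refine ⟨(a/b)/v, mem_Ioi.mpr (by positivity), ?_⟩
      simp only [hf]
      field_simp
  have hcv := integral_image_eq_integral_abs_deriv_smul measurableSet_Ioi hderiv hinj
      (fun x => Real.exp (-(a/x) - b*x) / Real.sqrt x)
  rw [himg] at hcv
  rw [hcv]
  rw [← MeasureTheory.integral_const_mul]
  apply setIntegral_congr_fun measurableSet_Ioi
  intro x hx
  have hx0 : (0:ℝ) < x := hx
  have hsx : 0 < Real.sqrt x := Real.sqrt_pos.mpr hx0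
  have hfx : f x = (a/b)/x := by simp [hf, div_eq_mul_inv]
  have habs : |(a/b) * (-(x^2)⁻¹)| = (a/b)/x^2 := by
    rw [mul_neg, abs_neg, abs_of_pos (by positivity), div_eq_mul_inv, div_eq_mul_inv]
  have hsqf : Real.sqrt (f x) = Real.sqrt (a/b) / Real.sqrt x := by
    rw [hfx, Real.sqrt_div hab.le]
  have hexp : -(a/(f x)) - b*(f x) = -(a/x) - b*x := by
    rw [hfx]
    field_simp
    ring
  simp only [smul_eq_mul]
  rw [habs, hexp, hsqf]
  obtain ⟨s, hsd⟩ : ∃ s, s = Real.sqrt (a/b) := ⟨_, rfl⟩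
  obtain ⟨t, htd⟩ : ∃ t, t = Real.sqrt x := ⟨_, rfl⟩
  have hs2 : s*s = a/b := by rw [hsd]; exact Real.mul_self_sqrt hab.le
  have ht2 : t*t = x := by rw [htd]; exact Real.mul_self_sqrt hx0.le
  have hs0 : s ≠ 0 := by rw [hsd]; positivity
  have ht0 : t ≠ 0 := by rw [htd]; positivity
  rw [← hsd, ← htd, ← hs2, ← ht2]
  field_simp

lemma I3_key (a b : ℝ) (ha : 0 < a) (hb : 0 < b) :
    IntegrableOn (fun x => Real.exp (-(a/x) - b*x) / (x * Real.sqrt x)) (Ioi (0:ℝ)) ∧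
    ∫ x in Ioi (0:ℝ), Real.exp (-(a/x) - b*x) / (x * Real.sqrt x)
      = Real.sqrt π * Real.exp (-(2*Real.sqrt (a*b))) / Real.sqrt a := by
  have hsa : 0 < Real.sqrt a := Real.sqrt_pos.mpr ha
  have hsb : 0 < Real.sqrt b := Real.sqrt_pos.mpr hb
  set E : ℝ → ℝ := fun x => Real.exp (-(a/x) - b*x) with hE
  set S : ℝ → ℝ := fun x =>
    (Real.sqrt a/(2*x*Real.sqrt x) + Real.sqrt b/(2*Real.sqrt x)) * E x with hS
  set u : ℝ → ℝ := fun x => Real.sqrt a / Real.sqrt x - Real.sqrt b * Real.sqrt x with hu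
  have hderiv : ∀ x ∈ Ioi (0:ℝ), HasDerivWithinAt u
      (-(Real.sqrt a/(2*x*Real.sqrt x) + Real.sqrt b/(2*Real.sqrt x))) (Ioi 0) x := by
    intro x hx
    have hx0 : (0:ℝ) < x := hx
    have hsx : 0 < Real.sqrt x := Real.sqrt_pos.mpr hx0
    have h1 : HasDerivAt (fun y : ℝ => Real.sqrt a / Real.sqrt y)
        ((0 * Real.sqrt x - Real.sqrt a * (1/(2*Real.sqrt x))) / (Real.sqrt x)^2) x :=
      (hasDerivAt_const x (Real.sqrt a)).div (Real.hasDerivAt_sqrt hx0.ne') hsx.ne'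
    have h2 : HasDerivAt (fun y : ℝ => Real.sqrt b * Real.sqrt y)
        (Real.sqrt b * (1/(2*Real.sqrt x))) x :=
      (Real.hasDerivAt_sqrt hx0.ne').const_mul (Real.sqrt b)
    have := (h1.sub h2).hasDerivWithinAt (s := Ioi (0:ℝ))
    refine this.congr_deriv ?_
    have hxx : Real.sqrt x ^ 2 = x := Real.sq_sqrt hx0.le
    field_simp
    nlinarith [hxx, hsx]
  have hinj : InjOn u (Ioi (0:ℝ)) := by
    have : StrictAntiOn u (Ioi (0:ℝ)) := by
      intro x hx y hy hxy
      have hx0 : (0:ℝ) < x := hx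
      have hy0 : (0:ℝ) < y := hy
      have hs : Real.sqrt x < Real.sqrt y := Real.sqrt_lt_sqrt hx0.le hxy
      have hsx : 0 < Real.sqrt x := Real.sqrt_pos.mpr hx0
      have h1 : Real.sqrt a / Real.sqrt y < Real.sqrt a / Real.sqrt x :=
        div_lt_div_of_pos_left hsa hsx hs
      have h2 : Real.sqrt b * Real.sqrt x < Real.sqrt b * Real.sqrt y :=
        (mul_lt_mul_iff_right₀ hsb).mpr hs
      simp only [hu]
      linarith
    exact this.injOn
  have hre : ∀ x ∈ Ioi (0:ℝ),
      |(-(Real.sqrt a/(2*x*Real.sqrt x) + Real.sqrt b/(2*Real.sqrt x)))| • Real.exp (-(u x)^2)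
      = S x * Real.exp (2*Real.sqrt (a*b)) := by
    intro x hx
    have hx0 : (0:ℝ) < x := hx
    have hsx : 0 < Real.sqrt x := Real.sqrt_pos.mpr hx0
    have habs : |(-(Real.sqrt a/(2*x*Real.sqrt x) + Real.sqrt b/(2*Real.sqrt x)))|
        = Real.sqrt a/(2*x*Real.sqrt x) + Real.sqrt b/(2*Real.sqrt x) := by
      rw [abs_neg, abs_of_pos]
      positivity
    have hu2 : (u x)^2 = a/x + b*x - 2*Real.sqrt (a*b) := by
      simp only [hu]
      have h1 : Real.sqrt a ^ 2 = a := Real.sq_sqrt ha.le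
      have h2 : Real.sqrt b ^ 2 = b := Real.sq_sqrt hb.le
      have h3 : Real.sqrt x ^ 2 = x := Real.sq_sqrt hx0.le
      have h4 : Real.sqrt (a*b) = Real.sqrt a * Real.sqrt b := Real.sqrt_mul ha.le b
      rw [sub_sq, div_pow, mul_pow, h1, h2, h3, h4]
      field_simp
      ring
    rw [habs, hu2, smul_eq_mul]
    rw [show -(a/x + b*x - 2*Real.sqrt (a*b)) = (-(a/x) - b*x) + 2*Real.sqrt (a*b) by ring,
      Real.exp_add]
    simp only [hS, hE]
    ring
  -- integrability of S
  have hgint : Integrable (fun v : ℝ => Real.exp (-v^2)) := by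
    have := integrable_exp_neg_mul_sq (one_pos (α := ℝ))
    simpa using this
  have hiff := integrableOn_image_iff_integrableOn_abs_deriv_smul measurableSet_Ioi hderiv hinj
      (fun v => Real.exp (-v^2))
  have hSint' : IntegrableOn
      (fun x => |(-(Real.sqrt a/(2*x*Real.sqrt x) + Real.sqrt b/(2*Real.sqrt x)))|
        • Real.exp (-(u x)^2)) (Ioi 0) := hiff.mp hgint.integrableOn
  have hSint2 : IntegrableOn (fun x => S x * Real.exp (2*Real.sqrt (a*b))) (Ioi 0) :=
    hSint'.congr_fun hre measurableSet_Ioi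
  have hSint : IntegrableOn S (Ioi 0) := by
    have h := hSint2.mul_const (Real.exp (2*Real.sqrt (a*b)))⁻¹
    apply h.congr
    apply ae_of_all
    intro x
    field_simp
  -- continuity facts
  have hcE : ContinuousOn E (Ioi (0:ℝ)) := by
    apply ContinuousOn.rexp
    apply ContinuousOn.sub
    · exact (continuousOn_const.div continuousOn_id (fun x hx => ne_of_gt hx)).neg
    · exact (continuous_const.mul continuous_id).continuousOn
  have hc3 : ContinuousOn (fun x => E x / (x * Real.sqrt x)) (Ioi (0:ℝ)) :=
    hcE.div ((continuous_id.mul continuous_sqrt).continuousOn)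
      (fun x hx => by have hx0 : (0:ℝ) < x := hx; positivity)
  have hc1 : ContinuousOn (fun x => E x / Real.sqrt x) (Ioi (0:ℝ)) :=
    hcE.div (continuous_sqrt.continuousOn)
      (fun x hx => by have hx0 : (0:ℝ) < x := hx; positivity)
  have hEpos : ∀ x, 0 < E x := fun x => Real.exp_pos _
  -- integrability of the pieces
  have h3int : IntegrableOn (fun x => E x / (x * Real.sqrt x)) (Ioi (0:ℝ)) := by
    apply Integrable.mono' (hSint.const_mul (2/Real.sqrt a))
      (hc3.aestronglyMeasurable measurableSet_Ioi)
    rw [ae_restrict_iff' measurableSet_Ioi]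
    apply ae_of_all
    intro x hx
    have hx0 : (0:ℝ) < x := hx
    have hsx : 0 < Real.sqrt x := Real.sqrt_pos.mpr hx0
    have hid : 2/Real.sqrt a * S x
        = E x / (x * Real.sqrt x) + (Real.sqrt b/Real.sqrt a) * (E x / Real.sqrt x) := by
      simp only [hS]
      field_simp
    have hpos : 0 ≤ (Real.sqrt b/Real.sqrt a) * (E x / Real.sqrt x) := by positivity
    rw [Real.norm_eq_abs, abs_of_nonneg (by positivity)]
    linarith
  have h1int : IntegrableOn (fun x => E x / Real.sqrt x) (Ioi (0:ℝ)) := by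
    apply Integrable.mono' (hSint.const_mul (2/Real.sqrt b))
      (hc1.aestronglyMeasurable measurableSet_Ioi)
    rw [ae_restrict_iff' measurableSet_Ioi]
    apply ae_of_all
    intro x hx
    have hx0 : (0:ℝ) < x := hx
    have hsx : 0 < Real.sqrt x := Real.sqrt_pos.mpr hx0
    have hid : 2/Real.sqrt b * S x
        = E x / Real.sqrt x + (Real.sqrt a/Real.sqrt b) * (E x / (x * Real.sqrt x)) := by
      simp only [hS]
      field_simp
      ring
    have hpos : 0 ≤ (Real.sqrt a/Real.sqrt b) * (E x / (x * Real.sqrt x)) := by positivity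
    rw [Real.norm_eq_abs, abs_of_nonneg (by positivity)]
    linarith
  refine ⟨h3int, ?_⟩
  -- split the integral from cov1
  have hcov1 := cov1 a b ha hb
  have hsplit : ∀ x ∈ Ioi (0:ℝ),
      (Real.sqrt a/(2*x*Real.sqrt x) + Real.sqrt b/(2*Real.sqrt x)) * Real.exp (-(a/x) - b*x)
      = Real.sqrt a/2 * (E x / (x * Real.sqrt x)) + Real.sqrt b/2 * (E x / Real.sqrt x) := by
    intro x hx
    have hx0 : (0:ℝ) < x := hx
    have hsx : 0 < Real.sqrt x := Real.sqrt_pos.mpr hx0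
    simp only [hE]
    field_simp
  rw [setIntegral_congr_fun measurableSet_Ioi hsplit] at hcov1
  rw [integral_add (h3int.const_mul _) (h1int.const_mul _)] at hcov1
  rw [MeasureTheory.integral_const_mul, MeasureTheory.integral_const_mul] at hcov1
  rw [cov2 a b ha hb] at hcov1
  have hba : Real.sqrt b * Real.sqrt (a/b) = Real.sqrt a := by
    rw [← Real.sqrt_mul hb.le]
    congr 1
    field_simp
  rw [eq_div_iff hsa.ne']
  simp only [hE] at hcov1 ⊢
  linear_combination hcov1
    - ((∫ x in Ioi (0:ℝ), Real.exp (-(a/x) - b*x) / (x * Real.sqrt x)) / 2) * hba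

lemma ig_mgf_integral (lam θ z t : ℝ) (hlam : 0 < lam) (hθ : 0 < θ) (hz0 : 0 < z)
    (ht : t = lam/(2*θ^2) - lam/(2*z^2)) :
    ∫ x : ℝ, Real.exp (t * x)
      ∂(volume.withDensity (fun x => ENNReal.ofReal
        (if 0 < x then Real.sqrt (lam / (2 * π * x ^ 3))
            * Real.exp (-(lam * (x - θ) ^ 2) / (2 * θ ^ 2 * x)) else 0)))
    = Real.exp (lam/θ - lam/z) := by
  set d : ℝ → ℝ := fun x => if 0 < x then Real.sqrt (lam / (2 * π * x ^ 3))
      * Real.exp (-(lam * (x - θ) ^ 2) / (2 * θ ^ 2 * x)) else 0 with hd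
  have hd_meas : Measurable d := by
    apply Measurable.ite (measurableSet_lt measurable_const measurable_id)
    · apply Measurable.mul
      · exact Real.continuous_sqrt.measurable.comp
          (measurable_const.div ((measurable_id.pow_const 3).const_mul (2*π)))
      · exact Real.continuous_exp.measurable.comp
          ((((measurable_id.sub_const θ).pow_const 2).const_mul lam).neg.div
            (measurable_id.const_mul (2*θ^2)))
    · exact measurable_const
  have hd_nonneg : ∀ x, 0 ≤ d x := by
    intro x
    simp only [hd]
    split
    · positivity
    · exact le_refl 0
  have key := integral_withDensity_eq_integral_smul (μ := volume) (hd_meas.real_toNNReal)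
      (fun x => Real.exp (t * x))
  change ∫ x : ℝ, Real.exp (t * x)
      ∂(volume.withDensity fun x => ((d x).toNNReal : ENNReal)) = _
  rw [key]
  have hsm : ∀ x : ℝ, (d x).toNNReal • Real.exp (t*x) = d x * Real.exp (t*x) := by
    intro x
    simp [NNReal.smul_def, Real.coe_toNNReal _ (hd_nonneg x)]
  simp_rw [hsm]
  rw [← setIntegral_eq_integral_of_forall_compl_eq_zero
      (s := Ioi (0:ℝ)) (fun x hx => by
        simp only [hd, if_neg (fun h => hx (mem_Ioi.mpr h))]
        ring)]
  have hpt : ∀ x ∈ Ioi (0:ℝ), d x * Real.exp (t*x)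
      = (Real.sqrt (lam/(2*π)) * Real.exp (lam/θ))
        * (Real.exp (-((lam/2)/x) - (lam/(2*z^2))*x) / (x * Real.sqrt x)) := by
    intro x hx
    have hx0 : (0:ℝ) < x := hx
    have hsx : 0 < Real.sqrt x := Real.sqrt_pos.mpr hx0
    simp only [hd, if_pos hx0]
    have hsqrt : Real.sqrt (lam / (2 * π * x ^ 3))
        = Real.sqrt (lam/(2*π)) / (x * Real.sqrt x) := by
      rw [show lam / (2 * π * x ^ 3) = (lam/(2*π))/(x^3) by
        rw [div_div]
      ]
      rw [Real.sqrt_div (by positivity) (x^3)]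
      congr 1
      rw [show x^3 = (x*Real.sqrt x)^2 by
        rw [mul_pow, Real.sq_sqrt hx0.le]; ring]
      exact Real.sqrt_sq (by positivity)
    rw [hsqrt]
    have hexp : -(lam * (x - θ) ^ 2) / (2 * θ ^ 2 * x) + t*x
        = lam/θ + (-((lam/2)/x) - (lam/(2*z^2))*x) := by
      subst ht
      field_simp
      ring
    have : Real.exp (-(lam * (x - θ) ^ 2) / (2 * θ ^ 2 * x)) * Real.exp (t*x)
        = Real.exp (lam/θ) * Real.exp (-((lam/2)/x) - (lam/(2*z^2))*x) := by
      rw [← Real.exp_add, ← Real.exp_add, hexp]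
    rw [mul_assoc, this]
    ring
  rw [setIntegral_congr_fun measurableSet_Ioi hpt]
  rw [MeasureTheory.integral_const_mul]
  rw [(I3_key (lam/2) (lam/(2*z^2)) (by positivity) (by positivity)).2]
  rw [show (lam/2)*(lam/(2*z^2)) = (lam/(2*z))^2 by field_simp]
  rw [Real.sqrt_sq (by positivity)]
  have hs1 : Real.sqrt (lam/(2*π)) = Real.sqrt (lam/2) / Real.sqrt π := by
    rw [show lam/(2*π) = (lam/2)/π by rw [div_div], Real.sqrt_div (by positivity) π]
  rw [hs1]
  have hspi : 0 < Real.sqrt π := Real.sqrt_pos.mpr Real.pi_pos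
  have hsl : 0 < Real.sqrt (lam/2) := Real.sqrt_pos.mpr (by positivity)
  rw [show (2:ℝ)*(lam/(2*z)) = lam/z by field_simp]
  rw [show lam/θ - lam/z = lam/θ + -(lam/z) by ring, Real.exp_add]
  field_simp


/-- Lower tail bound for the sample mean of `n` i.i.d. inverse Gaussian random variables
with parameters `λ > 0`, `θ > 0`. -/
theorem inverseGaussian_sample_mean_tail
    {Ω : Type*} [MeasurableSpace Ω] (P : Measure Ω) [IsProbabilityMeasure P]
    (n : ℕ) (hn : 0 < n) (X : Fin n → Ω → ℝ) (lam θ : ℝ) (hlam : 0 < lam) (hθ : 0 < θ)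
    (hmeas : ∀ i, Measurable (X i))
    (hindep : iIndepFun X P)
    (hdist : ∀ i, Measure.map (X i) P =
      volume.withDensity (fun x => ENNReal.ofReal
        (if 0 < x then
          Real.sqrt (lam / (2 * π * x ^ 3))
            * Real.exp (-(lam * (x - θ) ^ 2) / (2 * θ ^ 2 * x))
        else 0)))
    (z : ℝ) (hz0 : 0 < z) (hz : z ≤ θ) :
    P {ω | (∑ i, X i ω) / n ≤ z} ≤
      ENNReal.ofReal
        ((Real.exp (lam / θ - lam / (2 * z) - lam * z / (2 * θ ^ 2))) ^ n) := by
  obtain ⟨t, htdef⟩ : ∃ t : ℝ, t = lam/(2*θ^2) - lam/(2*z^2) := ⟨_, rfl⟩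
  have ht : t ≤ 0 := by
    rw [htdef, sub_nonpos, div_le_div_iff₀ (by positivity) (by positivity)]
    nlinarith [mul_nonneg (mul_nonneg hlam.le (sub_nonneg.mpr hz))
      (by linarith : (0:ℝ) ≤ θ + z)]
  have haepos : ∀ i, ∀ᵐ ω ∂P, 0 < X i ω := by
    intro i
    rw [ae_iff]
    have hset : {ω | ¬ 0 < X i ω} = X i ⁻¹' (Iic 0) := by
      ext ω; simp [not_lt]
    rw [hset, ← Measure.map_apply (hmeas i) measurableSet_Iic, hdist i,
      withDensity_apply _ measurableSet_Iic]
    have hz0' : ∀ᵐ x ∂(volume.restrict (Iic (0:ℝ))), (ENNReal.ofReal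
        (if 0 < x then Real.sqrt (lam / (2 * π * x ^ 3))
            * Real.exp (-(lam * (x - θ) ^ 2) / (2 * θ ^ 2 * x)) else 0)) = 0 := by
      rw [ae_restrict_iff' measurableSet_Iic]
      apply ae_of_all
      intro x hx
      rw [if_neg (not_lt.mpr hx)]
      simp
    rw [lintegral_congr_ae hz0', lintegral_zero]
  have haesum : ∀ᵐ ω ∂P, 0 ≤ (∑ i, X i) ω := by
    filter_upwards [ae_all_iff.mpr haepos] with ω hω
    simp only [Finset.sum_apply]
    exact Finset.sum_nonneg (fun i _ => (hω i).le)
  have hmeassum : Measurable (∑ i, X i) := by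
    rw [show (∑ i, X i) = (fun ω => ∑ i, X i ω) from funext fun ω => by
      simp [Finset.sum_apply]]
    exact Finset.measurable_sum _ (fun i _ => hmeas i)
  have hint : Integrable (fun ω => Real.exp (t * (∑ i, X i) ω)) P := by
    apply Integrable.mono' (integrable_const (1:ℝ))
      ((hmeassum.const_mul t).exp.aestronglyMeasurable)
    filter_upwards [haesum] with ω hω
    rw [Real.norm_eq_abs, abs_of_pos (Real.exp_pos _)]
    exact Real.exp_le_one_iff.mpr (mul_nonpos_iff.mpr (Or.inr ⟨ht, hω⟩))
  have hev : {ω | (∑ i, X i ω) / n ≤ z} = {ω | (∑ i, X i) ω ≤ z * n} := by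
    ext ω
    simp only [Set.mem_setOf_eq, Finset.sum_apply]
    rw [div_le_iff₀ (by exact_mod_cast hn : (0:ℝ) < (n:ℝ))]
  have hch := measure_le_le_exp_mul_mgf (μ := P) (X := ∑ i, X i) (z * n) ht hint
  have hmgf : ∀ i, mgf (X i) P t = Real.exp (lam/θ - lam/z) := by
    intro i
    have hg : AEStronglyMeasurable (fun x : ℝ => Real.exp (t * x)) (Measure.map (X i) P) :=
      (Real.continuous_exp.comp (continuous_const.mul continuous_id)).aestronglyMeasurable
    have heq : ∫ ω, Real.exp (t * X i ω) ∂P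
        = ∫ x, Real.exp (t * x) ∂(Measure.map (X i) P) :=
      (integral_map (hmeas i).aemeasurable hg).symm
    show (∫ ω, Real.exp (t * X i ω) ∂P) = _
    rw [heq, hdist i, ig_mgf_integral lam θ z t hlam hθ hz0 htdef]
  rw [hindep.mgf_sum hmeas] at hch
  rw [hev, ← ENNReal.ofReal_toReal (measure_ne_top P _)]
  apply ENNReal.ofReal_le_ofReal
  refine hch.trans (le_of_eq ?_)
  have hprod : ∏ i : Fin n, mgf (X i) P t = (Real.exp (lam/θ - lam/z))^n := by
    rw [Finset.prod_congr rfl (fun i _ => hmgf i), Finset.prod_const, Finset.card_univ,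
      Fintype.card_fin]
  rw [hprod]
  rw [show -t * (z * (n:ℝ)) = (n:ℝ) * (-t * z) by ring, Real.exp_nat_mul, ← mul_pow,
    ← Real.exp_add]
  congr 1
  rw [htdef]
  field_simp
  ring
end

section
/- Let X₁, …, Xₙ be i.i.d. random variables with the Laplace distribution of location α ∈ ℝ and scale β > 0, and let X̄ₙ = (1/n)∑_{i=1}^n Xᵢ. Then: (i) for all z ≥ α + β, Pr{X̄ₙ ≥ z} ≤ [ ((z−α)/β)·exp(1 − (z−α)/β) ]ⁿ; (ii) for all z ≤ α − β, Pr{X̄ₙ ≤ z} ≤ [ ((α−z)/β)·exp(1 − (α−z)/β) ]ⁿ. -/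
open MeasureTheory ProbabilityTheory Real

section LaplaceAux
open MeasureTheory Real Set
open scoped ENNReal NNReal

lemma int_Ioi {b : ℝ} (hb : 0 < b) :
    IntegrableOn (fun y : ℝ => exp (-b * y)) (Ioi 0) ∧
    ∫ y in Ioi (0:ℝ), exp (-b * y) = b⁻¹ := by
  refine ⟨exp_neg_integrableOn_Ioi 0 hb, ?_⟩
  have h := integral_comp_mul_left_Ioi (fun x => exp (-x)) 0 hb
  simp only [mul_zero, integral_exp_neg_Ioi, neg_zero, exp_zero, smul_eq_mul, mul_one] at h
  simpa [neg_mul] using h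

lemma int_Iic {b : ℝ} (hb : 0 < b) :
    IntegrableOn (fun y : ℝ => exp (b * y)) (Iic 0) ∧
    ∫ y in Iic (0:ℝ), exp (b * y) = b⁻¹ := by
  constructor
  · have h1 : IntegrableOn (fun y : ℝ => exp (-b * y)) (Ici 0) := by
      rw [integrableOn_Ici_iff_integrableOn_Ioi]
      exact (int_Ioi hb).1
    have h2 := (h1.integrable_indicator measurableSet_Ici).comp_neg
    rw [← integrable_indicator_iff measurableSet_Iic]
    convert h2 using 1
    · rfl
    ext y
    by_cases hy : y ≤ 0 <;>
      simp [Set.indicator, hy, neg_nonneg, Function.comp, mul_comm] <;> ring_nf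
  · have h := integral_comp_neg_Iic (0:ℝ) (fun x => exp (-b * x))
    simp only [neg_zero] at h
    rw [show (∫ y in Iic (0:ℝ), exp (b * y)) = ∫ x in Iic (0:ℝ), exp (-b * -x) by
      congr 1; ext y; ring_nf, h]
    exact (int_Ioi hb).2

lemma lap_integral (α β t : ℝ) (hβ : 0 < β) (ht : |t| < β⁻¹) :
    Integrable (fun x => exp (t*x) * ((2*β)⁻¹ * exp (-|x-α|/β))) volume ∧
    ∫ x, exp (t*x) * ((2*β)⁻¹ * exp (-|x-α|/β)) = exp (t*α) / (1 - β^2*t^2) := by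
  have hb1 : 0 < β⁻¹ - t := by cases abs_lt.mp ht; linarith
  have hb2 : 0 < β⁻¹ + t := by cases abs_lt.mp ht; linarith
  set C : ℝ := exp (t*α) * (2*β)⁻¹ with hC
  set G : ℝ → ℝ := fun y => exp (t*(y+α)) * ((2*β)⁻¹ * exp (-|y|/β)) with hG
  have key : ∀ K a b : ℝ, exp a * (K * exp b) = K * exp (a + b) := fun K a b => by
    rw [exp_add]; ring
  have key2 : ∀ K a b : ℝ, exp a * K * exp b = K * exp (a + b) := fun K a b => by
    rw [exp_add]; ring
  have hIoiEq : EqOn G (fun y => C * exp (-(β⁻¹ - t) * y)) (Ioi 0) := by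
    intro y hy
    simp only [hG, hC, abs_of_pos (mem_Ioi.mp hy), div_eq_mul_inv]
    rw [key, key2]
    congr 1
    ring
  have hIicEq : EqOn G (fun y => C * exp ((β⁻¹ + t) * y)) (Iic 0) := by
    intro y hy
    simp only [hG, hC, abs_of_nonpos (mem_Iic.mp hy), div_eq_mul_inv]
    rw [key, key2]
    congr 1
    ring
  have hIoi : IntegrableOn G (Ioi 0) := by
    have h' : IntegrableOn (fun y => C * exp (-(β⁻¹ - t) * y)) (Ioi 0) :=
      ((int_Ioi hb1).1).const_mul C
    exact h'.congr_fun hIoiEq.symm measurableSet_Ioi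
  have hIic : IntegrableOn G (Iic 0) := by
    have h' : IntegrableOn (fun y => C * exp ((β⁻¹ + t) * y)) (Iic 0) :=
      ((int_Iic hb2).1).const_mul C
    exact h'.congr_fun hIicEq.symm measurableSet_Iic
  have hGint : Integrable G := by
    rw [← integrableOn_univ, ← Set.Iic_union_Ioi (a := (0:ℝ))]
    exact hIic.union hIoi
  have hIoiVal : ∫ y in Ioi (0:ℝ), G y = C * (β⁻¹ - t)⁻¹ := by
    rw [setIntegral_congr_fun measurableSet_Ioi hIoiEq, integral_const_mul, (int_Ioi hb1).2]
  have hIicVal : ∫ y in Iic (0:ℝ), G y = C * (β⁻¹ + t)⁻¹ := by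
    rw [setIntegral_congr_fun measurableSet_Iic hIicEq, integral_const_mul, (int_Iic hb2).2]
  have hGval : ∫ y, G y = exp (t*α) / (1 - β^2*t^2) := by
    rw [← intervalIntegral.integral_Iic_add_Ioi hIic hIoi, hIoiVal, hIicVal, hC]
    have hq1 : (0:ℝ) < 1 + t * β := by nlinarith [mul_pos hβ hb2, mul_inv_cancel₀ hβ.ne']
    have hq2 : (0:ℝ) < 1 - t * β := by nlinarith [mul_pos hβ hb1, mul_inv_cancel₀ hβ.ne']
    have e1 : (β⁻¹ + t)⁻¹ = β / (1 + t * β) := by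
      rw [show β⁻¹ + t = (1 + t * β)/β by field_simp, inv_div]
    have e2 : (β⁻¹ - t)⁻¹ = β / (1 - t * β) := by
      rw [show β⁻¹ - t = (1 - t * β)/β by field_simp, inv_div]
    have h0 : (1:ℝ) - β^2*t^2 ≠ 0 := by nlinarith [mul_pos hq1 hq2]
    rw [e1, e2]
    field_simp [hq1.ne', hq2.ne']
    have h0' : (1:ℝ) - t^2*β^2 ≠ 0 := by rwa [mul_comm] at h0
    field_simp
    ring
  have hshift : (fun x => exp (t*x) * ((2*β)⁻¹ * exp (-|x-α|/β))) = fun x => G (x - α) := by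
    ext x
    simp only [hG, sub_add_cancel]
  constructor
  · rw [hshift]; exact hGint.comp_sub_right α
  · rw [hshift, integral_sub_right_eq_self G α, hGval]

lemma lap_mgf {Ω : Type*} [MeasurableSpace Ω] (P : Measure Ω) [IsProbabilityMeasure P]
    (Y : Ω → ℝ) (α β t : ℝ) (hβ : 0 < β) (ht : |t| < β⁻¹)
    (hm : Measurable Y)
    (hd : Measure.map Y P = volume.withDensity (fun x => ENNReal.ofReal
      ((2*β)⁻¹ * exp (-|x-α|/β)))) :
    Integrable (fun ω => exp (t * Y ω)) P ∧
    ProbabilityTheory.mgf Y P t = exp (t*α) / (1 - β^2*t^2) := by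
  set d : ℝ → ℝ := fun x => (2*β)⁻¹ * exp (-|x-α|/β) with hdd
  have hdm : Measurable d := by
    apply Measurable.const_mul
    exact (measurable_id.sub_const α).abs.neg.div_const β |>.exp
  have hdnn : ∀ x, 0 ≤ d x := fun x => by positivity
  have hint := lap_integral α β t hβ ht
  have hIm : Integrable (fun x => exp (t*x)) (Measure.map Y P) := by
    rw [hd, integrable_withDensity_iff (by exact hdm.ennreal_ofReal)
      (ae_of_all _ fun x => ENNReal.ofReal_lt_top)]
    refine hint.1.congr ?_
    filter_upwards with x
    rw [ENNReal.toReal_ofReal (hdnn x)]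
  have hIP : Integrable (fun ω => exp (t * Y ω)) P :=
    (integrable_map_measure (Measurable.aestronglyMeasurable (by fun_prop))
      hm.aemeasurable).mp hIm
  refine ⟨hIP, ?_⟩
  have hmap := integral_map (μ := P) (φ := Y) (f := fun x => exp (t*x)) hm.aemeasurable
    (Measurable.aestronglyMeasurable (by fun_prop))
  rw [ProbabilityTheory.mgf, ← hmap, hd]
  have hrw : (fun x : ℝ => ENNReal.ofReal ((2*β)⁻¹ * exp (-|x-α|/β)))
      = fun x => ((fun y => (d y).toNNReal) x : ℝ≥0∞) := rfl
  rw [hrw, integral_withDensity_eq_integral_smul hdm.real_toNNReal (fun x => exp (t*x)),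
    ← hint.2]
  congr 1
  ext x
  rw [NNReal.smul_def, Real.coe_toNNReal _ (hdnn x), smul_eq_mul, mul_comm]

lemma key_le (c : ℝ) (hc : 1 ≤ c) :
    exp (1 - c) / (1 - (1 - c⁻¹)^2) ≤ c * exp (1 - c) := by
  have hc0 : (0:ℝ) < c := lt_of_lt_of_le one_pos hc
  have h2 : 0 < c⁻¹ := inv_pos.2 hc0
  have h3 : c⁻¹ ≤ 1 := inv_le_one_of_one_le₀ hc
  have hci : c * c⁻¹ = 1 := mul_inv_cancel₀ hc0.ne'
  have h1 : (0:ℝ) < 1 - (1 - c⁻¹)^2 := by nlinarith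
  rw [div_le_iff₀ h1]
  have hc2 : c * (1 - (1 - c⁻¹)^2) = 2 - c⁻¹ := by field_simp; ring
  have h4 : 1 ≤ 2 - c⁻¹ := by linarith
  calc exp (1 - c) = exp (1 - c) * 1 := (mul_one _).symm
    _ ≤ exp (1 - c) * (2 - c⁻¹) := by
        exact mul_le_mul_of_nonneg_left h4 (exp_pos _).le
    _ = c * exp (1 - c) * (1 - (1 - c⁻¹)^2) := by rw [mul_comm c, mul_assoc, hc2]

lemma inner_eq (β c z αv t : ℝ) (hzc : t * (z - αv) = c - 1)
    (hts : β^2 * t^2 = (1 - c⁻¹)^2) :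
    exp (-t*z) * (exp (t*αv)/(1-β^2*t^2)) = exp (1-c) / (1 - (1-c⁻¹)^2) := by
  rw [← mul_div_assoc, ← exp_add, hts]
  congr 1
  have h : -t*z + t*αv = -(t*(z-αv)) := by ring
  rw [h, hzc]
  ring


end LaplaceAux

/-- Tail bounds for the sample mean of `n` i.i.d. Laplace random variables
with location `α` and scale `β > 0`. -/
theorem laplace_sample_mean_tail
    {Ω : Type*} [MeasurableSpace Ω] (P : Measure Ω) [IsProbabilityMeasure P]
    (n : ℕ) (hn : 0 < n) (X : Fin n → Ω → ℝ) (α β : ℝ) (hβ : 0 < β)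
    (hmeas : ∀ i, Measurable (X i))
    (hindep : iIndepFun X P)
    (hdist : ∀ i, Measure.map (X i) P =
      volume.withDensity (fun x => ENNReal.ofReal
        ((2 * β)⁻¹ * Real.exp (-|x - α| / β))))
    (z : ℝ) :
    (α + β ≤ z →
      P {ω | z ≤ (∑ i, X i ω) / n} ≤
        ENNReal.ofReal (((z - α) / β * Real.exp (1 - (z - α) / β)) ^ n)) ∧
    (z ≤ α - β →
      P {ω | (∑ i, X i ω) / n ≤ z} ≤
        ENNReal.ofReal (((α - z) / β * Real.exp (1 - (α - z) / β)) ^ n)) := by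
  have hnR : (0:ℝ) < n := Nat.cast_pos.mpr hn
  constructor
  · intro hz
    set c := (z - α)/β with hcdef
    have hc : 1 ≤ c := (one_le_div hβ).mpr (by linarith)
    have hc0 : (0:ℝ) < c := lt_of_lt_of_le one_pos hc
    have hs0 : 0 ≤ 1 - c⁻¹ := by
      have := inv_le_one_of_one_le₀ hc; linarith
    have hs1 : 1 - c⁻¹ < 1 := by have := inv_pos.2 hc0; linarith
    set t := (1 - c⁻¹)/β with htdef
    have ht0 : 0 ≤ t := div_nonneg hs0 hβ.le
    have htlt : |t| < β⁻¹ := by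
      have h := (div_lt_div_iff_of_pos_right hβ).mpr hs1
      rw [one_div] at h
      rw [abs_of_nonneg ht0, htdef]
      exact h
    have hmgf := fun i => lap_mgf P (X i) α β t hβ htlt (hmeas i) (hdist i)
    have hint := hindep.integrable_exp_mul_sum hmeas (s := Finset.univ)
      (fun i _ => (hmgf i).1)
    have hch := measure_ge_le_exp_mul_mgf (μ := P) (X := ∑ i, X i) (z * n) ht0 hint
    have hmgfsum : mgf (∑ i, X i) P t = (exp (t*α) / (1 - β^2*t^2))^n := by
      rw [hindep.mgf_sum hmeas, Finset.prod_congr rfl (fun i _ => (hmgf i).2),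
        Finset.prod_const, Finset.card_univ, Fintype.card_fin]
    have hset : {ω | z ≤ (∑ i, X i ω) / n} = {ω | z * n ≤ (∑ i, X i) ω} := by
      ext ω
      simp only [Set.mem_setOf_eq, Finset.sum_apply]
      rw [le_div_iff₀ hnR]
    rw [hset]
    have hb0 : 0 ≤ c * exp (1 - c) := mul_nonneg hc0.le (exp_pos _).le
    refine (ENNReal.le_ofReal_iff_toReal_le (measure_ne_top P _)
      (pow_nonneg hb0 n)).mpr (hch.trans ?_)
    rw [hmgfsum, show -t * (z * (n:ℝ)) = (n:ℝ) * (-t * z) by ring, exp_nat_mul, ← mul_pow]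
    have hzα : z - α = c * β := by rw [hcdef]; field_simp
    have hzc : t * (z - α) = c - 1 := by
      rw [hzα, htdef]; field_simp
    have hts : β^2 * t^2 = (1 - c⁻¹)^2 := by rw [htdef]; field_simp
    have hBpos : (0:ℝ) < 1 - β^2*t^2 := by
      rw [hts]; nlinarith
    refine pow_le_pow_left₀ (mul_nonneg (exp_pos _).le
      (div_nonneg (exp_pos _).le hBpos.le)) ?_ n
    rw [inner_eq β c z α t hzc hts]
    exact key_le c hc
  · intro hz
    set c := (α - z)/β with hcdef
    have hc : 1 ≤ c := (one_le_div hβ).mpr (by linarith)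
    have hc0 : (0:ℝ) < c := lt_of_lt_of_le one_pos hc
    have hs0 : 0 ≤ 1 - c⁻¹ := by
      have := inv_le_one_of_one_le₀ hc; linarith
    have hs1 : 1 - c⁻¹ < 1 := by have := inv_pos.2 hc0; linarith
    set t := -((1 - c⁻¹)/β) with htdef
    have ht0 : t ≤ 0 := neg_nonpos.mpr (div_nonneg hs0 hβ.le)
    have htlt : |t| < β⁻¹ := by
      have h := (div_lt_div_iff_of_pos_right hβ).mpr hs1
      rw [one_div] at h
      rw [htdef, abs_neg, abs_of_nonneg (div_nonneg hs0 hβ.le)]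
      exact h
    have hmgf := fun i => lap_mgf P (X i) α β t hβ htlt (hmeas i) (hdist i)
    have hint := hindep.integrable_exp_mul_sum hmeas (s := Finset.univ)
      (fun i _ => (hmgf i).1)
    have hch := measure_le_le_exp_mul_mgf (μ := P) (X := ∑ i, X i) (z * n) ht0 hint
    have hmgfsum : mgf (∑ i, X i) P t = (exp (t*α) / (1 - β^2*t^2))^n := by
      rw [hindep.mgf_sum hmeas, Finset.prod_congr rfl (fun i _ => (hmgf i).2),
        Finset.prod_const, Finset.card_univ, Fintype.card_fin]
    have hset : {ω | (∑ i, X i ω) / n ≤ z} = {ω | (∑ i, X i) ω ≤ z * n} := by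
      ext ω
      simp only [Set.mem_setOf_eq, Finset.sum_apply]
      rw [div_le_iff₀ hnR]
    rw [hset]
    have hb0 : 0 ≤ c * exp (1 - c) := mul_nonneg hc0.le (exp_pos _).le
    refine (ENNReal.le_ofReal_iff_toReal_le (measure_ne_top P _)
      (pow_nonneg hb0 n)).mpr (hch.trans ?_)
    rw [hmgfsum, show -t * (z * (n:ℝ)) = (n:ℝ) * (-t * z) by ring, exp_nat_mul, ← mul_pow]
    have hzα : z - α = -(c * β) := by rw [hcdef]; field_simp; ring
    have hzc : t * (z - α) = c - 1 := by
      rw [hzα, htdef]; field_simp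
    have hts : β^2 * t^2 = (1 - c⁻¹)^2 := by rw [htdef]; field_simp
    have hBpos : (0:ℝ) < 1 - β^2*t^2 := by
      rw [hts]; nlinarith
    refine pow_le_pow_left₀ (mul_nonneg (exp_pos _).le
      (div_nonneg (exp_pos _).le hBpos.le)) ?_ n
    rw [inner_eq β c z α t hzc hts]
    exact key_le c hc
end

section
/- Let X₁, …, Xₙ be i.i.d. random variables with the lognormal distribution of parameters μ ∈ ℝ and σ > 0, and let X̄ₙ = (1/n)∑_{i=1}^n Xᵢ. Then for all z with 0 < z ≤ e^μ, Pr{X̄ₙ ≤ z} ≤ exp( −(n/2)·((μ − ln z)/σ)² ). -/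
open MeasureTheory Real Set ProbabilityTheory
open scoped ENNReal NNReal

section AuxLemmas

lemma integrable_exp_quad {b : ℝ} (hb : 0 < b) (c d : ℝ) :
    Integrable (fun x : ℝ => Real.exp (-b * x ^ 2 + c * x + d)) := by
  have h : ∀ x : ℝ, -b * x^2 + c*x + d
      = -b * (x - c/(2*b))^2 + (d + c^2/(4*b)) := by
    intro x; field_simp; ring
  simp_rw [h, Real.exp_add]
  exact ((integrable_exp_neg_mul_sq hb).comp_sub_right (c/(2*b))).mul_const _

lemma integral_exp_quad {b : ℝ} (hb : 0 < b) (c d : ℝ) :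
    ∫ x : ℝ, Real.exp (-b * x ^ 2 + c * x + d)
      = Real.sqrt (π / b) * Real.exp (d + c ^ 2 / (4 * b)) := by
  have h : ∀ x : ℝ, -b * x^2 + c*x + d
      = -b * (x - c/(2*b))^2 + (d + c^2/(4*b)) := by
    intro x; field_simp; ring
  simp_rw [h, Real.exp_add, integral_mul_const]
  rw [integral_sub_right_eq_self (fun x => Real.exp (-b * x^2)) (c/(2*b)),
    integral_gaussian]

/-- the lognormal pdf -/
noncomputable def lnpdf (μ σ : ℝ) (x : ℝ) : ℝ :=
  if 0 < x then
    (x * Real.sqrt (2 * π) * σ)⁻¹ * Real.exp (-(Real.log x - μ) ^ 2 / (2 * σ ^ 2))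
  else 0

variable {μ σ : ℝ}

lemma lnpdf_nonneg (hσ : 0 < σ) (x : ℝ) : 0 ≤ lnpdf μ σ x := by
  unfold lnpdf
  split
  · positivity
  · exact le_rfl

lemma measurable_lnpdf : Measurable (lnpdf μ σ) := by
  unfold lnpdf
  exact Measurable.ite measurableSet_Ioi (by measurability) measurable_const

lemma lnpdf_key (hσ : 0 < σ) (t : ℝ) (y : ℝ) :
    |Real.exp y| • (lnpdf μ σ (Real.exp y) * Real.exp (t * Real.log (Real.exp y)))
      = (Real.sqrt (2 * π) * σ)⁻¹
        * Real.exp (-(2 * σ ^ 2)⁻¹ * y ^ 2 + (t + μ / σ ^ 2) * y + -(μ ^ 2 / (2 * σ ^ 2))) := by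
  rw [abs_of_pos (exp_pos y), smul_eq_mul, lnpdf, if_pos (exp_pos y), Real.log_exp]
  have h1 : Real.exp y * ((Real.exp y * Real.sqrt (2 * π) * σ)⁻¹
        * Real.exp (-(y - μ) ^ 2 / (2 * σ ^ 2)) * Real.exp (t * y))
      = (Real.exp y * (Real.exp y)⁻¹) * ((Real.sqrt (2 * π) * σ)⁻¹
        * (Real.exp (-(y - μ) ^ 2 / (2 * σ ^ 2)) * Real.exp (t * y))) := by
    rw [mul_inv, mul_inv]; ring
  rw [h1, mul_inv_cancel₀ (exp_pos y).ne', one_mul, ← Real.exp_add]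
  congr 2
  field_simp
  ring

lemma exp_image_univ : Real.exp '' univ = Ioi (0:ℝ) := by
  rw [image_univ, Real.range_exp]

lemma exp_hasDeriv : ∀ y ∈ (univ : Set ℝ),
    HasDerivWithinAt Real.exp (Real.exp y) univ y :=
  fun y _ => (Real.hasDerivAt_exp y).hasDerivWithinAt

lemma lnpdf_integrable_exp_mul_log (hσ : 0 < σ) (t : ℝ) :
    Integrable (fun x => lnpdf μ σ x * Real.exp (t * Real.log x)) := by
  have hb : (0:ℝ) < (2 * σ ^ 2)⁻¹ := by positivity
  have h0 : Function.support (fun x => lnpdf μ σ x * Real.exp (t * Real.log x)) ⊆ Ioi 0 := by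
    intro x hx
    by_contra hx'
    refine hx ?_
    simp only [lnpdf, if_neg (show ¬ (0:ℝ) < x by simpa using hx'), zero_mul]
  rw [← integrableOn_iff_integrable_of_support_subset h0, ← exp_image_univ,
    integrableOn_image_iff_integrableOn_abs_deriv_smul MeasurableSet.univ exp_hasDeriv
      Real.exp_injective.injOn]
  simp_rw [lnpdf_key hσ t, integrableOn_univ]
  exact (integrable_exp_quad hb _ _).const_mul _

lemma lnpdf_integral_exp_mul_log (hσ : 0 < σ) (t : ℝ) :
    ∫ x, lnpdf μ σ x * Real.exp (t * Real.log x)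
      = Real.exp (μ * t + σ ^ 2 * t ^ 2 / 2) := by
  have hb : (0:ℝ) < (2 * σ ^ 2)⁻¹ := by positivity
  have h0 : ∀ x, x ∉ Ioi (0:ℝ) → lnpdf μ σ x * Real.exp (t * Real.log x) = 0 := by
    intro x hx
    rw [lnpdf, if_neg (by simpa using hx), zero_mul]
  rw [← setIntegral_eq_integral_of_forall_compl_eq_zero h0, ← exp_image_univ,
    integral_image_eq_integral_abs_deriv_smul MeasurableSet.univ exp_hasDeriv
      Real.exp_injective.injOn]
  simp_rw [lnpdf_key hσ t]
  rw [setIntegral_univ, integral_const_mul, integral_exp_quad hb]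
  have hsq : Real.sqrt (π / (2 * σ ^ 2)⁻¹) = Real.sqrt (2 * π) * σ := by
    have h2 : π / (2 * σ ^ 2)⁻¹ = (2 * π) * σ ^ 2 := by
      field_simp
    rw [h2, Real.sqrt_mul (by positivity), Real.sqrt_sq hσ.le]
  rw [hsq, ← mul_assoc, inv_mul_cancel₀ (by positivity), one_mul]
  congr 1
  field_simp
  ring

end AuxLemmas

/-- Lower tail bound for the sample mean of `n` i.i.d. lognormal random variables
with parameters `μ` and `σ > 0`. -/
theorem lognormal_sample_mean_tail
    {Ω : Type*} [MeasurableSpace Ω] (P : Measure Ω) [IsProbabilityMeasure P]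
    (n : ℕ) (hn : 0 < n) (X : Fin n → Ω → ℝ) (μ σ : ℝ) (hσ : 0 < σ)
    (hmeas : ∀ i, Measurable (X i))
    (hindep : iIndepFun X P)
    (hdist : ∀ i, Measure.map (X i) P =
      volume.withDensity (fun x => ENNReal.ofReal
        (if 0 < x then
          (x * Real.sqrt (2 * π) * σ)⁻¹
            * Real.exp (-(Real.log x - μ) ^ 2 / (2 * σ ^ 2))
        else 0)))
    (z : ℝ) (hz0 : 0 < z) (hz : z ≤ Real.exp μ) :
    P {ω | (∑ i, X i ω) / n ≤ z} ≤
      ENNReal.ofReal (Real.exp (-(n / 2) * ((μ - Real.log z) / σ) ^ 2)) := by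
  have hdist' : ∀ i, Measure.map (X i) P
      = volume.withDensity (fun x => ENNReal.ofReal (lnpdf μ σ x)) := by
    intro i; rw [hdist i]; simp only [lnpdf]
  set L : ℝ := Real.log z with hLdef
  have hL : L ≤ μ := by
    have := Real.log_le_log hz0 hz
    rwa [Real.log_exp] at this
  set t : ℝ := (L - μ) / σ ^ 2 with htdef
  have ht : t ≤ 0 := div_nonpos_of_nonpos_of_nonneg (by linarith) (by positivity)
  set Y : Fin n → Ω → ℝ := fun i ω => Real.log (X i ω) with hYdef
  have hYmeas : ∀ i, Measurable (Y i) := fun i => Real.measurable_log.comp (hmeas i)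
  have hYindep : iIndepFun Y P :=
    hindep.comp (fun _ => Real.log) (fun _ => Real.measurable_log)
  -- measurability of exp (t * log x)
  have hg : Measurable fun x : ℝ => Real.exp (t * Real.log x) :=
    (Real.measurable_log.const_mul t).exp
  have hd : Measurable fun x => (lnpdf μ σ x).toNNReal :=
    measurable_lnpdf.real_toNNReal
  -- mgf and integrability of each Y i
  have hsmul : ∀ x : ℝ, (lnpdf μ σ x).toNNReal • Real.exp (t * Real.log x)
      = lnpdf μ σ x * Real.exp (t * Real.log x) := by
    intro x
    rw [NNReal.smul_def, Real.coe_toNNReal _ (lnpdf_nonneg hσ x), smul_eq_mul]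
  have hint : ∀ i, Integrable (fun ω => Real.exp (t * Y i ω)) P := by
    intro i
    have h1 : Integrable (fun x => Real.exp (t * Real.log x)) (Measure.map (X i) P) := by
      rw [hdist' i]
      have : Integrable (fun x => Real.exp (t * Real.log x))
          (volume.withDensity fun x => ((lnpdf μ σ x).toNNReal : ℝ≥0∞)) := by
        rw [integrable_withDensity_iff_integrable_smul hd]
        simp_rw [hsmul]
        exact lnpdf_integrable_exp_mul_log hσ t
      exact this
    exact (integrable_map_measure hg.aestronglyMeasurable (hmeas i).aemeasurable).mp h1
  have hmgf : ∀ i, mgf (Y i) P t = Real.exp (μ * t + σ ^ 2 * t ^ 2 / 2) := by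
    intro i
    rw [mgf]
    have h1 : ∫ ω, Real.exp (t * Y i ω) ∂P
        = ∫ x, Real.exp (t * Real.log x) ∂(Measure.map (X i) P) :=
      (integral_map (hmeas i).aemeasurable hg.aestronglyMeasurable).symm
    rw [h1, hdist' i]
    have h2 : ∫ x, Real.exp (t * Real.log x)
        ∂(volume.withDensity fun x => ((lnpdf μ σ x).toNNReal : ℝ≥0∞))
        = ∫ x, (lnpdf μ σ x).toNNReal • Real.exp (t * Real.log x) :=
      integral_withDensity_eq_integral_smul hd _
    rw [show (fun x => ENNReal.ofReal (lnpdf μ σ x))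
        = fun x => ((lnpdf μ σ x).toNNReal : ℝ≥0∞) from rfl, h2]
    simp_rw [hsmul]
    exact lnpdf_integral_exp_mul_log hσ t
  -- a.s. positivity
  have hnull : P {ω | ¬ ∀ i, 0 < X i ω} = 0 := by
    have h1 : ∀ i, P {ω | X i ω ≤ 0} = 0 := by
      intro i
      have h2 : P {ω | X i ω ≤ 0} = Measure.map (X i) P (Iic 0) := by
        rw [Measure.map_apply (hmeas i) measurableSet_Iic]; rfl
      rw [h2, hdist' i, withDensity_apply _ measurableSet_Iic]
      have h3 : ∀ x ∈ Iic (0:ℝ), ENNReal.ofReal (lnpdf μ σ x) = 0 := by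
        intro x hx
        simp only [lnpdf, if_neg (not_lt.2 (mem_Iic.1 hx))]
        simp
      calc ∫⁻ x in Iic (0:ℝ), ENNReal.ofReal (lnpdf μ σ x)
          = ∫⁻ x in Iic (0:ℝ), 0 :=
            setLIntegral_congr_fun measurableSet_Iic (fun x hx => h3 x hx)
        _ = 0 := by simp
    have h4 : {ω | ¬ ∀ i, 0 < X i ω} = ⋃ i, {ω | X i ω ≤ 0} := by
      ext ω; simp [not_forall, not_lt]
    rw [h4]
    exact measure_iUnion_null h1
  -- event inclusion via AM-GM
  have hsub : {ω | (∑ i, X i ω) / n ≤ z}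
      ⊆ {ω | (∑ i, Y i) ω ≤ n * L} ∪ {ω | ¬ ∀ i, 0 < X i ω} := by
    intro ω hω
    by_cases hpos : ∀ i, 0 < X i ω
    · left
      have hw' : ∑ _i : Fin n, ((n:ℝ))⁻¹ = 1 := by
        rw [Finset.sum_const, Finset.card_univ, Fintype.card_fin, nsmul_eq_mul]
        field_simp
      have hgm := Real.geom_mean_le_arith_mean_weighted Finset.univ
        (fun _ => ((n:ℝ))⁻¹) (fun i => X i ω) (fun i _ => by positivity) hw'
        (fun i _ => (hpos i).le)
      have hgmpos : 0 < ∏ i, (X i ω) ^ ((n:ℝ))⁻¹ :=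
        Finset.prod_pos fun i _ => Real.rpow_pos_of_pos (hpos i) _
      have harith : ∑ i, ((n:ℝ))⁻¹ * X i ω ≤ z := by
        have : ∑ i, ((n:ℝ))⁻¹ * X i ω = (∑ i, X i ω) / n := by
          rw [← Finset.mul_sum]; ring
        rw [this]; exact hω
      have hlog : Real.log (∏ i, (X i ω) ^ ((n:ℝ))⁻¹) ≤ L :=
        Real.log_le_log hgmpos (hgm.trans harith)
      have hlogprod : Real.log (∏ i, (X i ω) ^ ((n:ℝ))⁻¹)
          = ∑ i, ((n:ℝ))⁻¹ * Real.log (X i ω) := by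
        rw [Real.log_prod (fun i _ => (Real.rpow_pos_of_pos (hpos i) _).ne')]
        exact Finset.sum_congr rfl fun i _ => Real.log_rpow (hpos i) _
      have hsum : ∑ i, ((n:ℝ))⁻¹ * Real.log (X i ω) = (∑ i, Y i ω) / n := by
        rw [← Finset.mul_sum]; ring
      have h5 : (∑ i, Y i ω) / n ≤ L := by
        rw [← hsum, ← hlogprod]; exact hlog
      have h6 : (∑ i, Y i) ω = ∑ i, Y i ω := by
        simp [Finset.sum_apply]
      simp only [Set.mem_setOf_eq, h6]
      have hn' : (0:ℝ) < n := Nat.cast_pos.2 hn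
      calc ∑ i, Y i ω = n * ((∑ i, Y i ω) / n) := by field_simp
        _ ≤ n * L := by
            exact mul_le_mul_of_nonneg_left h5 hn'.le
    · right; exact hpos
  -- Chernoff
  have hSint : Integrable (fun ω => Real.exp (t * (∑ i, Y i) ω)) P :=
    hYindep.integrable_exp_mul_sum hYmeas (fun i _ => hint i)
  have hcher := measure_le_le_exp_mul_mgf (X := ∑ i, Y i) (μ := P)
    ((n:ℝ) * L) ht hSint
  have hmgfsum : mgf (∑ i, Y i) P t = Real.exp ((n:ℝ) * (μ * t + σ ^ 2 * t ^ 2 / 2)) := by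
    rw [hYindep.mgf_sum hYmeas]
    simp_rw [hmgf]
    rw [Finset.prod_const, Finset.card_univ, Fintype.card_fin, ← Real.exp_nat_mul]
  have hexp : Real.exp (-t * ((n:ℝ) * L)) * Real.exp ((n:ℝ) * (μ * t + σ ^ 2 * t ^ 2 / 2))
      = Real.exp (-(n / 2) * ((μ - L) / σ) ^ 2) := by
    rw [← Real.exp_add]
    congr 1
    rw [htdef]
    field_simp
    ring
  calc P {ω | (∑ i, X i ω) / n ≤ z}
      ≤ P ({ω | (∑ i, Y i) ω ≤ n * L} ∪ {ω | ¬ ∀ i, 0 < X i ω}) := measure_mono hsub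
    _ ≤ P {ω | (∑ i, Y i) ω ≤ n * L} + P {ω | ¬ ∀ i, 0 < X i ω} := measure_union_le _ _
    _ = P {ω | (∑ i, Y i) ω ≤ n * L} := by rw [hnull, add_zero]
    _ ≤ ENNReal.ofReal (Real.exp (-(n / 2) * ((μ - L) / σ) ^ 2)) := by
        rw [← ENNReal.ofReal_toReal (measure_ne_top P _)]
        apply ENNReal.ofReal_le_ofReal
        calc (P {ω | (∑ i, Y i) ω ≤ (n:ℝ) * L}).toReal
            ≤ Real.exp (-t * ((n:ℝ) * L)) * mgf (∑ i, Y i) P t := hcher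
          _ = Real.exp (-(n / 2) * ((μ - L) / σ) ^ 2) := by rw [hmgfsum, hexp]
end

section
/- Let X₁, …, Xₙ be i.i.d. random variables with the Pareto distribution of parameters a > 0 and θ > 1, let X̄ₙ = (1/n)∑_{i=1}^n Xᵢ, and let μ = θa/(θ−1). Then for all ρ with 1 − 1/θ < ρ ≤ (1 − 1/θ)·exp(1/θ), Pr{X̄ₙ ≤ ρμ} ≤ [ eθ·((θ−1)/(ρθ))^θ · ln(ρθ/(θ−1)) ]ⁿ. -/
open MeasureTheory ProbabilityTheory Real

open Set

lemma pareto_key (a θ s : ℝ) (ha : 0 < a) : ∀ x ∈ Ioi a,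
    Real.exp (-s * Real.log (max x a)) *
      (if a < x then θ / a * (a / x) ^ (θ + 1) else 0)
      = (θ * a ^ θ) * x ^ (-(θ + 1 + s)) := by
  intro x hx
  have hax : a < x := hx
  have hx0 : 0 < x := ha.trans hax
  rw [if_pos hax, max_eq_left hax.le, mul_comm (-s), ← Real.rpow_def_of_pos hx0,
    Real.div_rpow ha.le hx0.le]
  rw [div_eq_mul_inv (a ^ (θ+1)), ← Real.rpow_neg hx0.le]
  rw [show x ^ (-s) * (θ / a * (a ^ (θ + 1) * x ^ (-(θ + 1)))) =
    (θ / a * a ^ (θ + 1)) * (x ^ (-(θ + 1)) * x ^ (-s)) by ring]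
  rw [← Real.rpow_add hx0, Real.rpow_add_one ha.ne' θ]
  rw [show θ / a * (a ^ θ * a) = θ * a ^ θ by field_simp]
  ring_nf

lemma pareto_int (a θ s : ℝ) (ha : 0 < a) (hθ : 1 < θ) (hs : 0 ≤ s) :
    IntegrableOn (fun x => Real.exp (-s * Real.log (max x a)) *
      (if a < x then θ / a * (a / x) ^ (θ + 1) else 0)) (Ioi a) volume := by
  have hp : -(θ + 1 + s) < -1 := by linarith
  have h0 : IntegrableOn (fun x => θ * a ^ θ * x ^ (-(θ + 1 + s))) (Ioi a) volume :=
    (integrableOn_Ioi_rpow_of_lt hp ha).const_mul _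
  exact h0.congr_fun (fun x hx => (pareto_key a θ s ha x hx).symm) measurableSet_Ioi

lemma pareto_val (a θ s : ℝ) (ha : 0 < a) (hθ : 1 < θ) (hs : 0 ≤ s) :
    ∫ x in Ioi a, Real.exp (-s * Real.log (max x a)) *
      (if a < x then θ / a * (a / x) ^ (θ + 1) else 0)
      = θ / (θ + s) * a ^ (-s) := by
  have hp : -(θ + 1 + s) < -1 := by linarith
  rw [setIntegral_congr_fun measurableSet_Ioi (pareto_key a θ s ha), integral_const_mul,
    integral_Ioi_rpow_of_lt hp ha]
  have h1 : -(θ + 1 + s) + 1 = -(θ + s) := by ring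
  have hθs : 0 < θ + s := by linarith
  rw [h1, Real.rpow_neg ha.le (θ + s), Real.rpow_add ha θ s, Real.rpow_neg ha.le s]
  rw [div_neg, neg_div, neg_neg, eq_comm]
  have ha2 : (a:ℝ) ^ θ ≠ 0 := (Real.rpow_pos_of_pos ha θ).ne'
  have ha3 : (a:ℝ) ^ s ≠ 0 := (Real.rpow_pos_of_pos ha s).ne'
  field_simp

noncomputable def pdens (a θ : ℝ) : ℝ → ℝ := fun x => if a < x then θ / a * (a / x) ^ (θ + 1) else 0

lemma pdens_meas (a θ : ℝ) : Measurable (pdens a θ) := by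
  refine Measurable.ite measurableSet_Ioi ?_ measurable_const
  have : Measurable fun x : ℝ => (a / x) ^ (θ + 1) := by fun_prop
  exact this.const_mul _

lemma pdens_nonneg (a θ : ℝ) (ha : 0 < a) (hθ : 1 < θ) (x : ℝ) : 0 ≤ pdens a θ x := by
  unfold pdens
  split_ifs with h
  · have hx0 : 0 < x := ha.trans h
    positivity
  · exact le_refl _

lemma pareto_full (a θ s : ℝ) (ha : 0 < a) (hθ : 1 < θ) (hs : 0 ≤ s) :
    Integrable (fun x => (pdens a θ x).toNNReal • Real.exp (-s * Real.log (max x a))) volume ∧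
    ∫ x, (pdens a θ x).toNNReal • Real.exp (-s * Real.log (max x a)) ∂volume
      = θ / (θ + s) * a ^ (-s) := by
  have heq : ∀ x : ℝ, (pdens a θ x).toNNReal • Real.exp (-s * Real.log (max x a))
      = Real.exp (-s * Real.log (max x a)) * pdens a θ x := by
    intro x
    rw [NNReal.smul_def, smul_eq_mul, Real.coe_toNNReal _ (pdens_nonneg a θ ha hθ x), mul_comm]
  simp_rw [heq]
  have hzero : ∀ x ∉ Ioi a, Real.exp (-s * Real.log (max x a)) * pdens a θ x = 0 := by
    intro x hx
    have : ¬ a < x := hx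
    simp [pdens, this]
  constructor
  · rw [← integrableOn_univ, ← Set.Iic_union_Ioi (a := a)]
    refine MeasureTheory.IntegrableOn.union ?_ (pareto_int a θ s ha hθ hs)
    refine (integrableOn_zero (s := Iic a)).congr_fun (fun x hx => ?_) measurableSet_Iic
    exact (hzero x (by simpa using hx)).symm
  · rw [← setIntegral_eq_integral_of_forall_compl_eq_zero hzero]
    exact pareto_val a θ s ha hθ hs

/-- Lower tail bound for the sample mean of `n` i.i.d. Pareto random variables
with scale `a > 0` and shape `θ > 1`, relative to the mean `μ = θa/(θ−1)`. -/
theorem pareto_sample_mean_tail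
    {Ω : Type*} [MeasurableSpace Ω] (P : Measure Ω) [IsProbabilityMeasure P]
    (n : ℕ) (hn : 0 < n) (X : Fin n → Ω → ℝ) (a θ : ℝ) (ha : 0 < a) (hθ : 1 < θ)
    (hmeas : ∀ i, Measurable (X i))
    (hindep : iIndepFun X P)
    (hdist : ∀ i, Measure.map (X i) P =
      volume.withDensity (fun x => ENNReal.ofReal
        (if a < x then θ / a * (a / x) ^ (θ + 1) else 0)))
    (ρ : ℝ) (hρ1 : 1 - 1 / θ < ρ) (hρ2 : ρ ≤ (1 - 1 / θ) * Real.exp (1 / θ)) :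
    P {ω | (∑ i, X i ω) / n ≤ ρ * (θ * a / (θ - 1))} ≤
      ENNReal.ofReal
        ((Real.exp 1 * θ * ((θ - 1) / (ρ * θ)) ^ θ
          * Real.log (ρ * θ / (θ - 1))) ^ n) := by
  classical
  have hθ0 : 0 < θ := by linarith
  have hθ1 : 0 < θ - 1 := by linarith
  have hρ0 : 0 < ρ := by
    have h1 : 0 < 1 - 1 / θ := by
      rw [sub_pos, div_lt_one hθ0]; exact hθ
    linarith
  set r : ℝ := ρ * θ / (θ - 1) with hr_def
  have hr0 : 0 < r := by positivity
  have hr1 : 1 < r := by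
    rw [hr_def, lt_div_iff₀ hθ1, one_mul]
    have := mul_lt_mul_of_pos_right hρ1 hθ0
    calc θ - 1 = (1 - 1/θ) * θ := by field_simp
    _ < ρ * θ := this
  have hr2 : r ≤ Real.exp (1/θ) := by
    rw [hr_def, div_le_iff₀ hθ1]
    have := mul_le_mul_of_nonneg_right hρ2 hθ0.le
    calc ρ * θ ≤ (1 - 1/θ) * Real.exp (1/θ) * θ := this
    _ = Real.exp (1/θ) * (θ - 1) := by field_simp
  set L : ℝ := Real.log r with hL_def
  have hL0 : 0 < L := Real.log_pos hr1
  have hLθ : L ≤ 1/θ := by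
    rw [hL_def, Real.log_le_iff_le_exp hr0]; exact hr2
  set s : ℝ := 1/L - θ with hs_def
  have hθs : θ + s = 1/L := by rw [hs_def]; ring
  have hs0 : 0 ≤ s := by
    rw [hs_def, sub_nonneg, le_div_iff₀ hL0]
    have h := mul_le_mul_of_nonneg_left hLθ hθ0.le
    calc θ * L ≤ θ * (1/θ) := h
    _ = 1 := by field_simp
  set c : ℝ := ρ * (θ * a / (θ - 1)) with hc_def
  have hca : c = a * r := by rw [hc_def, hr_def]; field_simp
  have hc0 : 0 < c := by rw [hca]; positivity
  -- the composed variables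
  set g : ℝ → ℝ := fun x => Real.exp (-s * Real.log (max x a)) with hg_def
  have hgmeas : Measurable g := by
    have h1 : Measurable fun x : ℝ => Real.log (max x a) :=
      Real.measurable_log.comp (measurable_id.max measurable_const)
    exact (h1.const_mul (-s)).exp
  set Y : Fin n → Ω → ℝ := fun i ω => Real.log (max (X i ω) a) with hY_def
  have hYmeas : ∀ i, Measurable (Y i) := fun i =>
    Real.measurable_log.comp ((hmeas i).max measurable_const)
  have hYindep : iIndepFun Y P :=
    hindep.comp (fun i (x : ℝ) => Real.log (max x a)) (fun i =>
      Real.measurable_log.comp (measurable_id.max measurable_const))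
  have hgX : ∀ i, (fun ω => Real.exp (-s * Y i ω)) = g ∘ (X i) := fun i => rfl
  -- density rewriting
  have hdens : ∀ i, Measure.map (X i) P =
      volume.withDensity (fun x => ((pdens a θ x).toNNReal : ENNReal)) := by
    intro i; rw [hdist i]; rfl
  have htoNN : Measurable fun x => (pdens a θ x).toNNReal :=
    (pdens_meas a θ).real_toNNReal
  -- integrability and mgf of each Y i
  have hint : ∀ i, Integrable (fun ω => Real.exp (-s * Y i ω)) P := by
    intro i
    rw [hgX i, ← integrable_map_measure (hgmeas.aestronglyMeasurable) (hmeas i).aemeasurable,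
      hdens i, integrable_withDensity_iff_integrable_smul htoNN]
    exact (pareto_full a θ s ha hθ hs0).1
  have hmgf : ∀ i, mgf (Y i) P (-s) = θ / (θ + s) * a ^ (-s) := by
    intro i
    calc mgf (Y i) P (-s) = ∫ x, g x ∂(Measure.map (X i) P) :=
          (integral_map (hmeas i).aemeasurable hgmeas.aestronglyMeasurable).symm
    _ = θ / (θ + s) * a ^ (-s) := by
          rw [hdens i, integral_withDensity_eq_integral_smul htoNN]
          exact (pareto_full a θ s ha hθ hs0).2
  -- X i > a almost surely
  have hXgt : ∀ i, ∀ᵐ ω ∂P, a < X i ω := by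
    intro i
    rw [ae_iff]
    have hset : {ω | ¬ a < X i ω} = X i ⁻¹' (Iic a) := by
      ext ω; simp [not_lt]
    rw [hset, ← Measure.map_apply (hmeas i) measurableSet_Iic, hdist i,
      withDensity_apply _ measurableSet_Iic]
    rw [setLIntegral_congr_fun measurableSet_Iic
      (fun x (hx : x ≤ a) => by rw [if_neg (not_lt.mpr hx), ENNReal.ofReal_zero])]
    simp
  -- a.e. event inclusion via AM-GM
  have hsub : ∀ᵐ ω ∂P, ω ∈ {ω | (∑ i, X i ω) / n ≤ c} →
      ω ∈ {ω | (∑ i, Y i) ω ≤ n * Real.log c} := by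
    have hall : ∀ᵐ ω ∂P, ∀ i, a < X i ω := (ae_all_iff).mpr hXgt
    filter_upwards [hall] with ω hω hmem
    have hXpos : ∀ i, 0 < X i ω := fun i => ha.trans (hω i)
    have hn0 : (0:ℝ) < n := by exact_mod_cast hn
    have hamgm : ∏ i, (X i ω) ^ ((n:ℝ)⁻¹) ≤ c := by
      have h1 := Real.geom_mean_le_arith_mean_weighted Finset.univ
        (fun _ => (n:ℝ)⁻¹) (fun i => X i ω)
        (fun i _ => by positivity)
        (by simp [Finset.card_univ]; field_simp)
        (fun i _ => (hXpos i).le)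
      refine h1.trans ?_
      have : ∑ i, (n:ℝ)⁻¹ * X i ω = (∑ i, X i ω) / n := by
        rw [← Finset.mul_sum]; ring
      rw [this]; exact hmem
    have hprodpos : 0 < ∏ i, (X i ω) ^ ((n:ℝ)⁻¹) :=
      Finset.prod_pos (fun i _ => Real.rpow_pos_of_pos (hXpos i) _)
    have hlog := Real.log_le_log hprodpos hamgm
    rw [Real.log_prod (fun i _ => (Real.rpow_pos_of_pos (hXpos i) _).ne')] at hlog
    simp_rw [Real.log_rpow (hXpos _)] at hlog
    rw [← Finset.mul_sum] at hlog
    show (∑ i, Y i) ω ≤ (n:ℝ) * Real.log c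
    rw [Finset.sum_apply]
    have hYX : ∀ i, Y i ω = Real.log (X i ω) := fun i => by
      rw [hY_def]; simp [max_eq_left (hω i).le]
    simp_rw [hYX]
    calc ∑ i, Real.log (X i ω) = (n:ℝ) * ((n:ℝ)⁻¹ * ∑ i, Real.log (X i ω)) := by
          field_simp
    _ ≤ (n:ℝ) * Real.log c := by
          exact mul_le_mul_of_nonneg_left hlog hn0.le
  -- Chernoff
  have hintsum : Integrable (fun ω => Real.exp (-s * (∑ i, Y i) ω)) P :=
    hYindep.integrable_exp_mul_sum hYmeas (fun i _ => hint i)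
  have hcher := measure_le_le_exp_mul_mgf (X := ∑ i, Y i) (μ := P)
    ((n:ℝ) * Real.log c) (neg_nonpos.mpr hs0) hintsum
  rw [hYindep.mgf_sum hYmeas] at hcher
  simp_rw [hmgf] at hcher
  rw [Finset.prod_const, Finset.card_univ, Fintype.card_fin] at hcher
  -- combine
  have hmono : P {ω | (∑ i, X i ω) / n ≤ c} ≤ P {ω | (∑ i, Y i) ω ≤ n * Real.log c} :=
    measure_mono_ae hsub
  have hfin : P {ω | (∑ i, Y i) ω ≤ n * Real.log c} ≠ ⊤ := measure_ne_top _ _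
  have hfinal : P {ω | (∑ i, X i ω) / n ≤ c} ≤
      ENNReal.ofReal (Real.exp (-(-s) * ((n:ℝ) * Real.log c)) *
        (θ / (θ + s) * a ^ (-s)) ^ n) := by
    refine hmono.trans ?_
    rw [← ENNReal.ofReal_toReal hfin]
    exact ENNReal.ofReal_le_ofReal hcher
  refine hfinal.trans (le_of_eq ?_)
  congr 1
  -- arithmetic identity
  rw [neg_neg]
  have e1 : s * ((n:ℝ) * Real.log c) = (n:ℝ) * (s * Real.log c) := by ring
  rw [e1, Real.exp_nat_mul, ← mul_pow]
  congr 1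
  have e2 : Real.exp (s * Real.log c) = c ^ s := by
    rw [Real.rpow_def_of_pos hc0, mul_comm]
  have e3 : θ / (θ + s) = θ * L := by
    rw [hθs]; field_simp
  rw [e2, e3]
  have e4 : c ^ s * (θ * L * a ^ (-s)) = (c/a) ^ s * (θ * L) := by
    rw [Real.div_rpow hc0.le ha.le, Real.rpow_neg ha.le]
    field_simp
  rw [e4]
  have e5 : (c/a) = r := by rw [hca]; field_simp
  rw [e5]
  have e6 : r ^ s = Real.exp 1 * ((θ - 1)/(ρ * θ)) ^ θ := by
    have h7 : ((θ - 1)/(ρ * θ)) = r⁻¹ := by rw [hr_def, inv_div]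
    rw [h7, Real.rpow_def_of_pos (inv_pos.mpr hr0), Real.log_inv, ← hL_def,
      Real.rpow_def_of_pos hr0, ← hL_def, ← Real.exp_add]
    congr 1
    rw [hs_def]
    field_simp
    ring
  rw [e6]
  ring
end
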